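/- arXiv:1605.00058 — 3 statements merged into one kernel-verified Lean document; each statement's English description precedes it below -/
import Mathlib

section
/- Let k be an even positive integer, d ≥ 1 an integer, and n ≥ 1. For any order-k tensor A ∈ ℝ^{[n]^k} with natural flattening A_flat (an n^{k/2} × n^{k/2} matrix), the injective tensor norm satisfies ‖A‖_inj ≤ ( ‖ E_{Π,Σ∈Ŝ_{kd/2}}[ Π (A_flat)^{⊗d} Σ ] ‖ )^{1/d}. -/
open MeasureTheory Matrix

/-- The spectral (operator) norm of a square real matrix. -/
noncomputable def sNorm {ι : Type*} [Fintype ι] [DecidableEq ι] (M : Matrix ι ι ℝ) : ℝ :=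
  ‖Matrix.toEuclideanCLM (𝕜 := ℝ) M‖

/-- Average of `Π M Σ` over independent uniformly random permutation matrices `Π, Σ`
acting on the positions of tuple-indexed rows and columns. -/
noncomputable def symAvg {ι κ' : Type*} [Fintype ι] [DecidableEq ι] [Fintype κ']
    (M : Matrix (ι → κ') (ι → κ') ℝ) : Matrix (ι → κ') (ι → κ') ℝ :=
  fun I J => (∑ π : Equiv.Perm ι, ∑ σ : Equiv.Perm ι, M (I ∘ π) (J ∘ σ)) /
    ((Fintype.card (Equiv.Perm ι) : ℝ) ^ 2)

/-- Combine two `κ`-tuples into a `k = 2κ`-tuple (first `a`, then `b`). -/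
def joinIdx {n k κ : ℕ} (hk : k = 2 * κ) (a b : Fin κ → Fin n) : Fin k → Fin n :=
  fun i => if h : (i : ℕ) < κ then a ⟨i, h⟩ else b ⟨(i : ℕ) - κ, by have := i.isLt; omega⟩

/-- The natural flattening of an order-`2κ` tensor to an `n^κ × n^κ` matrix. -/
def flatten {n k κ : ℕ} (hk : k = 2 * κ) (A : (Fin k → Fin n) → ℝ) :
    Matrix (Fin κ → Fin n) (Fin κ → Fin n) ℝ :=
  fun a b => A (joinIdx hk a b)

/-- The `d`-fold Kronecker power of a matrix with rows and columns indexed by `κ`-tuples,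
with rows and columns reindexed by `(d·κ)`-tuples. -/
noncomputable def kronFlat {n κ : ℕ} (d : ℕ) (M : Matrix (Fin κ → Fin n) (Fin κ → Fin n) ℝ) :
    Matrix ((Fin d × Fin κ) → Fin n) ((Fin d × Fin κ) → Fin n) ℝ :=
  fun I J => ∏ t : Fin d, M (fun s => I (t, s)) (fun s => J (t, s))

/-- The injective tensor norm of an order-`k` tensor on `[n]`:
the supremum of `|⟨T, x^{⊗k}⟩|` over Euclidean unit vectors `x ∈ ℝ^n`. -/
noncomputable def injNorm {n k : ℕ} (T : (Fin k → Fin n) → ℝ) : ℝ :=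
  ⨆ x : {x : Fin n → ℝ // ∑ i, (x i) ^ 2 = 1},
    |∑ i : Fin k → Fin n, T i * ∏ j, x.1 (i j)|

/- ----------------- auxiliary lemmas ----------------- -/

lemma quad_le_sNorm {ι : Type*} [Fintype ι] [DecidableEq ι] (M : Matrix ι ι ℝ)
    (u : ι → ℝ) (hu : ∑ i, (u i) ^ 2 = 1) :
    |∑ i, ∑ j, u i * M i j * u j| ≤ sNorm M := by
  set u' : EuclideanSpace ℝ ι := (WithLp.equiv 2 (ι → ℝ)).symm u with hu'
  have hnorm : ‖u'‖ = 1 := by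
    rw [EuclideanSpace.norm_eq]
    have : ∀ i, ‖u' i‖ ^ 2 = u i ^ 2 := by
      intro i; rw [hu', WithLp.equiv_symm_apply, PiLp.toLp_apply, Real.norm_eq_abs, sq_abs]
    rw [Finset.sum_congr rfl (fun i _ => this i), hu, Real.sqrt_one]
  have key : ∑ i, ∑ j, u i * M i j * u j =
      inner (𝕜 := ℝ) u' ((toEuclideanCLM (𝕜 := ℝ) M) u') := by
    rw [hu', WithLp.equiv_symm_apply, toEuclideanCLM_toLp, PiLp.inner_apply]
    simp only [PiLp.toLp_apply, RCLike.inner_apply, starRingEnd_apply, star_trivial]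
    simp only [Matrix.toLin'_apply, Matrix.mulVec, dotProduct, Finset.mul_sum, Finset.sum_mul]
    congr 1; ext i; congr 1; ext j; ring
  rw [key]
  calc |inner (𝕜 := ℝ) u' ((toEuclideanCLM (𝕜 := ℝ) M) u')|
      ≤ ‖u'‖ * ‖(toEuclideanCLM (𝕜 := ℝ) M) u'‖ := abs_real_inner_le_norm _ _
    _ ≤ ‖u'‖ * (‖(toEuclideanCLM (𝕜 := ℝ) M)‖ * ‖u'‖) := by
        gcongr; exact ContinuousLinearMap.le_opNorm _ _
    _ = sNorm M := by rw [hnorm, sNorm]; ring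

/-- The pair-of-tuples to long-tuple equivalence underlying `joinIdx`. -/
def joinEquiv {n k κ : ℕ} (hk : k = 2 * κ) :
    ((Fin κ → Fin n) × (Fin κ → Fin n)) ≃ (Fin k → Fin n) where
  toFun p := joinIdx hk p.1 p.2
  invFun i := (fun s => i ⟨s, by omega⟩, fun s => i ⟨κ + s, by omega⟩)
  left_inv p := by
    ext s
    · simp [joinIdx]
    · simp only [joinIdx, Fin.is_lt]
      rw [dif_neg (by omega)]
      congr 1
      ext; simp
  right_inv i := by
    funext j
    simp only [joinIdx]
    split_ifs with h
    · rfl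
    · congr 1; ext; simp; omega

lemma prod_joinIdx {n k κ : ℕ} (hk : k = 2 * κ) (x : Fin n → ℝ) (a b : Fin κ → Fin n) :
    ∏ j, x (joinIdx hk a b j) = (∏ s, x (a s)) * ∏ s, x (b s) := by
  have h : κ + κ = k := by omega
  rw [← Equiv.prod_comp (finSumFinEquiv.trans (finCongr h))
    (fun j => x (joinIdx hk a b j)), Fintype.prod_sum_type]
  congr 1
  · refine Finset.prod_congr rfl fun s _ => ?_
    congr 1
    simp only [joinIdx, Equiv.trans_apply, finCongr_apply, finSumFinEquiv_apply_left]
    rw [dif_pos (by simp)]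
    simp
  · refine Finset.prod_congr rfl fun s _ => ?_
    congr 1
    simp only [joinIdx, Equiv.trans_apply, finCongr_apply, finSumFinEquiv_apply_right]
    rw [dif_neg (by simp)]
    congr 1
    ext; simp

lemma kron_quad {n κ : ℕ} (d : ℕ) (M : Matrix (Fin κ → Fin n) (Fin κ → Fin n) ℝ)
    (v : (Fin κ → Fin n) → ℝ) :
    (∑ a, ∑ b, v a * M a b * v b) ^ d =
      ∑ I : (Fin d × Fin κ) → Fin n, ∑ J : (Fin d × Fin κ) → Fin n,
        (∏ t, v (fun s => I (t, s))) * kronFlat d M I J * (∏ t, v (fun s => J (t, s))) := by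
  calc (∑ a, ∑ b, v a * M a b * v b) ^ d
      = ∏ _t : Fin d, ∑ a, ∑ b, v a * M a b * v b := by
        simp [Finset.prod_const]
    _ = ∑ I' : Fin d → (Fin κ → Fin n), ∏ t, ∑ b, v (I' t) * M (I' t) b * v b := by
        rw [Finset.prod_univ_sum, Fintype.piFinset_univ]
    _ = ∑ I' : Fin d → (Fin κ → Fin n), ∑ J' : Fin d → (Fin κ → Fin n),
          ∏ t, (v (I' t) * M (I' t) (J' t) * v (J' t)) := by
        refine Finset.sum_congr rfl fun I' _ => ?_
        rw [Finset.prod_univ_sum, Fintype.piFinset_univ]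
    _ = ∑ I' : Fin d → (Fin κ → Fin n), ∑ J' : Fin d → (Fin κ → Fin n), (∏ t, v (I' t)) * (∏ t, M (I' t) (J' t)) * (∏ t, v (J' t)) := by
        refine Finset.sum_congr rfl fun I' _ => Finset.sum_congr rfl fun J' _ => ?_
        rw [Finset.prod_mul_distrib, Finset.prod_mul_distrib]
    _ = ∑ I : (Fin d × Fin κ) → Fin n, ∑ J : (Fin d × Fin κ) → Fin n,
          (∏ t, v (fun s => I (t, s))) * kronFlat d M I J * (∏ t, v (fun s => J (t, s))) := by
        rw [← Equiv.sum_comp (Equiv.curry (Fin d) (Fin κ) (Fin n)).symm]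
        refine Finset.sum_congr rfl fun I' _ => ?_
        rw [← Equiv.sum_comp (Equiv.curry (Fin d) (Fin κ) (Fin n)).symm]
        exact Finset.sum_congr rfl fun J' _ => rfl

lemma symAvg_quad {ι κ' : Type*} [Fintype ι] [DecidableEq ι] [Fintype κ'] [DecidableEq κ']
    (K : Matrix (ι → κ') (ι → κ') ℝ) (u : (ι → κ') → ℝ)
    (hu : ∀ (π : Equiv.Perm ι) (I : ι → κ'), u (I ∘ π) = u I) :
    ∑ I, ∑ J, u I * symAvg K I J * u J = ∑ I, ∑ J, u I * K I J * u J := by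
  have hN : (0:ℝ) < (Fintype.card (Equiv.Perm ι) : ℝ) := by
    exact_mod_cast Fintype.card_pos
  have key : ∀ π σ : Equiv.Perm ι,
      ∑ I, ∑ J, u I * K (I ∘ π) (J ∘ σ) * u J = ∑ I, ∑ J, u I * K I J * u J := by
    intro π σ
    calc ∑ I, ∑ J, u I * K (I ∘ π) (J ∘ σ) * u J
        = ∑ I, ∑ J, u (I ∘ π) * K (I ∘ π) (J ∘ σ) * u (J ∘ σ) := by
          simp_rw [hu]
      _ = ∑ I, ∑ J, u I * K I (J ∘ σ) * u (J ∘ σ) :=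
          Equiv.sum_comp (Equiv.arrowCongr π.symm (Equiv.refl κ'))
            (fun I => ∑ J, u I * K I (J ∘ σ) * u (J ∘ σ))
      _ = ∑ I, ∑ J, u I * K I J * u J :=
          Finset.sum_congr rfl fun I _ =>
            Equiv.sum_comp (Equiv.arrowCongr σ.symm (Equiv.refl κ'))
              (fun J => u I * K I J * u J)
  calc ∑ I, ∑ J, u I * symAvg K I J * u J
      = ∑ I, ∑ J, (∑ π : Equiv.Perm ι, ∑ σ : Equiv.Perm ι,
          u I * K (I ∘ π) (J ∘ σ) * u J) / ((Fintype.card (Equiv.Perm ι) : ℝ) ^ 2) := by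
        refine Finset.sum_congr rfl fun I _ => Finset.sum_congr rfl fun J _ => ?_
        rw [symAvg]
        rw [show ∀ a b c : ℝ, ∀ N : ℝ, a * (b / N) * c = a * b * c / N from fun a b c N => by ring]
        congr 1
        simp only [Finset.mul_sum, Finset.sum_mul]
    _ = (∑ I, ∑ J, ∑ π : Equiv.Perm ι, ∑ σ : Equiv.Perm ι,
          u I * K (I ∘ π) (J ∘ σ) * u J) / ((Fintype.card (Equiv.Perm ι) : ℝ) ^ 2) := by
        rw [Finset.sum_div]
        refine Finset.sum_congr rfl fun I _ => ?_
        rw [Finset.sum_div]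
    _ = (∑ π : Equiv.Perm ι, ∑ σ : Equiv.Perm ι, ∑ I, ∑ J,
          u I * K (I ∘ π) (J ∘ σ) * u J) / ((Fintype.card (Equiv.Perm ι) : ℝ) ^ 2) := by
        congr 1
        calc ∑ I : ι → κ', ∑ J : ι → κ', ∑ π : Equiv.Perm ι, ∑ σ : Equiv.Perm ι,
              u I * K (I ∘ π) (J ∘ σ) * u J
            = ∑ I : ι → κ', ∑ π : Equiv.Perm ι, ∑ J : ι → κ', ∑ σ : Equiv.Perm ι,
              u I * K (I ∘ π) (J ∘ σ) * u J :=
              Finset.sum_congr rfl fun I _ => Finset.sum_comm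
          _ = ∑ π : Equiv.Perm ι, ∑ I : ι → κ', ∑ J : ι → κ', ∑ σ : Equiv.Perm ι,
              u I * K (I ∘ π) (J ∘ σ) * u J := Finset.sum_comm
          _ = ∑ π : Equiv.Perm ι, ∑ I : ι → κ', ∑ σ : Equiv.Perm ι, ∑ J : ι → κ',
              u I * K (I ∘ π) (J ∘ σ) * u J :=
              Finset.sum_congr rfl fun π _ => Finset.sum_congr rfl fun I _ => Finset.sum_comm
          _ = ∑ π : Equiv.Perm ι, ∑ σ : Equiv.Perm ι, ∑ I : ι → κ', ∑ J : ι → κ',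
              u I * K (I ∘ π) (J ∘ σ) * u J :=
              Finset.sum_congr rfl fun π _ => Finset.sum_comm
    _ = ∑ I, ∑ J, u I * K I J * u J := by
        simp_rw [key]
        rw [Finset.sum_const, Finset.sum_const, Finset.card_univ, nsmul_eq_mul, nsmul_eq_mul]
        field_simp
  done

/-- For an even-order tensor `A`, the injective tensor norm is at most the `d`-th root of the
spectral norm of the permutation-averaged `d`-th Kronecker power of the natural flattening. -/
theorem injNorm_le_symAvg_kronPow
    (n k κ d : ℕ) (hk : k = 2 * κ) (hκ : 1 ≤ κ) (hd : 1 ≤ d) (hn : 1 ≤ n)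
    (A : (Fin k → Fin n) → ℝ) :
    injNorm A ≤ (sNorm (symAvg (kronFlat d (flatten hk A)))) ^ (1 / (d : ℝ)) := by
  have : NeZero n := ⟨by omega⟩
  have hne : Nonempty {x : Fin n → ℝ // ∑ i, (x i) ^ 2 = 1} := by
    refine ⟨⟨fun i => if i = 0 then 1 else 0, ?_⟩⟩
    simp [ite_pow, Finset.sum_ite_eq']
  rw [injNorm]
  apply ciSup_le
  rintro ⟨x, hx⟩
  set M := flatten hk A with hM
  set S := sNorm (symAvg (kronFlat d M)) with hS
  set v : (Fin κ → Fin n) → ℝ := fun b => ∏ s, x (b s) with hv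
  set u : ((Fin d × Fin κ) → Fin n) → ℝ := fun I => ∏ p, x (I p) with huu
  set Q : ℝ := ∑ i : Fin k → Fin n, A i * ∏ j, x (i j) with hQ
  -- Step 1: Q = quadratic form of flattening
  have step1 : Q = ∑ a, ∑ b, v a * M a b * v b := by
    rw [hQ, ← Equiv.sum_comp (joinEquiv (n := n) hk) (fun i => A i * ∏ j, x (i j)),
      Fintype.sum_prod_type]
    refine Finset.sum_congr rfl fun a _ => Finset.sum_congr rfl fun b _ => ?_
    show A (joinIdx hk a b) * ∏ j, x (joinIdx hk a b j) = _
    rw [prod_joinIdx hk x a b, hM, flatten, hv]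
    ring
  -- u in terms of v
  have huv : ∀ I : (Fin d × Fin κ) → Fin n, u I = ∏ t, v (fun s => I (t, s)) := by
    intro I
    rw [huu, hv]
    exact Fintype.prod_prod_type _
  -- Step 2: Q^d = quadratic form of Kronecker power
  have step2 : Q ^ d = ∑ I, ∑ J, u I * kronFlat d M I J * u J := by
    rw [step1, kron_quad]
    exact Finset.sum_congr rfl fun I _ => Finset.sum_congr rfl fun J _ => by
      rw [huv I, huv J]
  -- permutation invariance of u
  have hperm' : ∀ (π : Equiv.Perm (Fin d × Fin κ)) (I : (Fin d × Fin κ) → Fin n),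
      u (I ∘ π) = u I := by
    intro π I
    rw [huu]
    exact Equiv.prod_comp π (fun p => x (I p))
  -- Step 3: symmetrization preserves quadratic form
  have step3 : ∑ I, ∑ J, u I * symAvg (kronFlat d M) I J * u J =
      ∑ I, ∑ J, u I * kronFlat d M I J * u J :=
    symAvg_quad _ u hperm'
  -- norm of u
  have hun : ∑ I, (u I) ^ 2 = 1 := by
    simp only [huu, ← Finset.prod_pow]
    have h2 := Finset.prod_univ_sum (fun _ : Fin d × Fin κ => (Finset.univ : Finset (Fin n)))
      (fun p j => x j ^ 2)
    rw [Fintype.piFinset_univ] at h2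
    rw [← h2]
    simp [hx]
  -- Step 4: |Q|^d ≤ S
  have step4 : |Q| ^ d ≤ S := by
    rw [← abs_pow, step2, ← step3]
    exact quad_le_sNorm _ u hun
  -- conclude
  have hS0 : 0 ≤ S := norm_nonneg _
  have : |Q| = (|Q| ^ d) ^ ((d : ℝ)⁻¹) :=
    (Real.pow_rpow_inv_natCast (abs_nonneg _) (by omega)).symm
  rw [this, one_div]
  exact Real.rpow_le_rpow (by positivity) step4 (by positivity)
end

section
/- Let n, d, k, ℓ be positive integers with d·k even and 2·d·k·ℓ·log n ≤ n. Let B be an n × n random matrix with i.i.d. Rademacher (uniform ±1) entries, and let C' = E_{Π,Σ∈Ŝ_{dk/2}}[ Π B^{⊗dk/2} Σ ]. Then E[ Tr((C' C'ᵀ)^ℓ) ] ≤ 2^{4dkℓ+1} · n^{dkℓ/2 + dk/2}. -/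
open MeasureTheory ProbabilityTheory Matrix

/-- The `m`-fold Kronecker power of an `n × n` matrix, with rows and columns indexed by
`m`-tuples of the original indices. -/
noncomputable def kronPow {n : ℕ} (m : ℕ) (B : Matrix (Fin n) (Fin n) ℝ) :
    Matrix ((Fin m) → Fin n) ((Fin m) → Fin n) ℝ :=
  fun I J => ∏ t : Fin m, B (I t) (J t)

namespace KronProof

section NormLemmas

open scoped Matrix.Norms.L2Operator

variable {α β γ : Type*} [Fintype α] [Fintype β] [Fintype γ]
variable [DecidableEq α] [DecidableEq β] [DecidableEq γ]

lemma le_of_sq_le_sq {a b : ℝ} (hb : 0 ≤ b) (h : a ^ 2 ≤ b ^ 2) (ha : 0 ≤ a) : a ≤ b := by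
  nlinarith

lemma euclNorm_sq (x : EuclideanSpace ℝ α) : ‖x‖ ^ 2 = ∑ i, x i ^ 2 := by
  rw [EuclideanSpace.norm_eq, Real.sq_sqrt (by positivity)]
  simp [sq_abs]

/-- mulVec bound, squared form. -/
lemma mulVec_sq_le (A : Matrix α β ℝ) (x : β → ℝ) :
    ∑ i, (A *ᵥ x) i ^ 2 ≤ ‖A‖ ^ 2 * ∑ j, x j ^ 2 := by
  have h := Matrix.l2_opNorm_mulVec A ((WithLp.equiv 2 (β → ℝ)).symm x)
  have hsq := pow_le_pow_left₀ (norm_nonneg _) h 2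
  rw [euclNorm_sq] at hsq
  calc ∑ i, (A *ᵥ x) i ^ 2
      ≤ (‖A‖ * ‖(WithLp.equiv 2 (β → ℝ)).symm x‖) ^ 2 := hsq
    _ = ‖A‖ ^ 2 * ∑ j, x j ^ 2 := by
        rw [mul_pow, euclNorm_sq]
        rfl

lemma opNorm_le_bound (A : Matrix α β ℝ) {c : ℝ} (hc : 0 ≤ c)
    (h : ∀ x : β → ℝ, ∑ i, (A *ᵥ x) i ^ 2 ≤ c ^ 2 * ∑ j, x j ^ 2) : ‖A‖ ≤ c := by
  rw [Matrix.l2_opNorm_def]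
  refine ContinuousLinearMap.opNorm_le_bound _ hc fun v => ?_
  have hv : ((Matrix.toEuclideanLin.trans LinearMap.toContinuousLinearMap) A) v
      = (WithLp.equiv 2 (α → ℝ)).symm (A *ᵥ (WithLp.equiv 2 (β → ℝ)) v) := by
    rw [LinearEquiv.trans_apply, LinearMap.coe_toContinuousLinearMap']
    exact Matrix.toEuclideanLin_apply A v
  rw [hv]
  have hsq : ‖(WithLp.equiv 2 (α → ℝ)).symm (A *ᵥ (WithLp.equiv 2 (β → ℝ)) v)‖ ^ 2
      ≤ (c * ‖v‖) ^ 2 := by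
    rw [euclNorm_sq, mul_pow]
    calc ∑ i, (A *ᵥ (WithLp.equiv 2 (β → ℝ)) v) i ^ 2
        ≤ c ^ 2 * ∑ j, ((WithLp.equiv 2 (β → ℝ)) v) j ^ 2 := h _
      _ = c ^ 2 * ‖v‖ ^ 2 := by
          rw [euclNorm_sq v]
          rfl
  exact le_of_sq_le_sq (by positivity) hsq (norm_nonneg _)

lemma abs_entry_le (A : Matrix α β ℝ) (i : α) (j : β) : |A i j| ≤ ‖A‖ := by
  have h := mulVec_sq_le A (Pi.single j 1)
  have hx : ∑ jj, (Pi.single j 1 : β → ℝ) jj ^ 2 = 1 := by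
    simp [Pi.single_apply, sq, Finset.sum_ite_eq']
  have hAj : (A *ᵥ Pi.single j 1) i = A i j := by
    simp [Matrix.mulVec, dotProduct, Pi.single_apply, mul_ite, Finset.sum_ite_eq']
  rw [hx, mul_one] at h
  have h2 : (A i j) ^ 2 ≤ ‖A‖ ^ 2 := by
    calc (A i j) ^ 2 = (A *ᵥ Pi.single j 1) i ^ 2 := by rw [hAj]
      _ ≤ ∑ i', (A *ᵥ Pi.single j 1) i' ^ 2 :=
          Finset.single_le_sum (f := fun i' => (A *ᵥ Pi.single j 1) i' ^ 2) (fun _ _ => sq_nonneg _) (Finset.mem_univ i)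
      _ ≤ ‖A‖ ^ 2 := h
  refine le_of_sq_le_sq (norm_nonneg _) ?_ (abs_nonneg _)
  rwa [sq_abs]

lemma abs_trace_le (X : Matrix α α ℝ) :
    |X.trace| ≤ (Fintype.card α : ℝ) * ‖X‖ := by
  calc |X.trace| ≤ ∑ i, |X i i| := by
        rw [Matrix.trace]
        exact Finset.abs_sum_le_sum_abs _ _
    _ ≤ ∑ _i : α, ‖X‖ := Finset.sum_le_sum fun i _ => abs_entry_le X i i
    _ = (Fintype.card α : ℝ) * ‖X‖ := by
        rw [Finset.sum_const, Finset.card_univ, nsmul_eq_mul]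

lemma norm_transpose (A : Matrix α β ℝ) : ‖Aᵀ‖ = ‖A‖ := by
  have h : Aᵀ = Aᴴ := by
    ext i j
    simp [Matrix.conjTranspose_apply]
  rw [h, Matrix.l2_opNorm_conjTranspose]

lemma norm_matrix_one [Nonempty α] : ‖(1 : Matrix α α ℝ)‖ = 1 := by
  have h := Matrix.l2_opNorm_conjTranspose_mul_self (1 : Matrix α α ℝ)
  have h1 : (1 : Matrix α α ℝ)ᴴ * 1 = 1 := by simp
  rw [h1] at h
  have hne : (1 : Matrix α α ℝ) ≠ 0 := by
    intro h0
    have := congrFun (congrFun h0 (Classical.arbitrary α)) (Classical.arbitrary α)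
    simp [Matrix.one_apply] at this
  have hpos : 0 < ‖(1 : Matrix α α ℝ)‖ := norm_pos_iff.2 hne
  nlinarith

/-- The 0-1 matrix of an equivalence. -/
def permMat (e : α ≃ β) : Matrix α β ℝ := Matrix.of fun a b => if b = e a then 1 else 0

lemma permMat_mul (e : α ≃ β) (A : Matrix β γ ℝ) :
    permMat e * A = Matrix.of fun a c => A (e a) c := by
  ext a c
  simp [permMat, Matrix.mul_apply, ite_mul, Finset.sum_ite_eq']

lemma mul_permMat_transpose (A : Matrix γ β ℝ) (e : α ≃ β) :
    A * (permMat e)ᵀ = Matrix.of fun c a => A c (e a) := by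
  ext c a
  simp [permMat, Matrix.mul_apply, Matrix.transpose_apply, mul_ite, Finset.sum_ite_eq']

lemma permMat_mul_transpose (e : α ≃ β) :
    permMat e * (permMat e)ᵀ = 1 := by
  ext a a'
  simp [permMat, Matrix.mul_apply, Matrix.transpose_apply, Matrix.one_apply, ite_mul, mul_ite,
    Finset.sum_ite_eq', Equiv.apply_eq_iff_eq, eq_comm]

lemma norm_permMat_transpose [Nonempty α] (e : α ≃ β) :
    ‖(permMat e)ᵀ‖ = 1 := by
  have h := Matrix.l2_opNorm_conjTranspose_mul_self ((permMat e)ᵀ)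
  have h0 : ((permMat e)ᵀ)ᴴ = permMat e := by
    ext a b
    simp [Matrix.conjTranspose_apply, permMat]
  rw [h0, permMat_mul_transpose, norm_matrix_one] at h
  have := norm_nonneg ((permMat e)ᵀ)
  rcases mul_self_eq_one_iff.1 h.symm with h1 | h1
  · exact h1
  · linarith [h1 ▸ this]

lemma norm_permMat [Nonempty α] (e : α ≃ β) :
    ‖permMat e‖ = 1 := by
  have h0 : ((permMat e)ᵀ)ᴴ = permMat e := by
    ext a b
    simp [Matrix.conjTranspose_apply, permMat]
  rw [← h0, Matrix.l2_opNorm_conjTranspose, norm_permMat_transpose]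

lemma norm_permMat_conj_le [Nonempty α]
    (A : Matrix β β ℝ) (e f : α ≃ β) :
    ‖permMat e * A * (permMat f)ᵀ‖ ≤ ‖A‖ := by
  calc ‖permMat e * A * (permMat f)ᵀ‖
      ≤ ‖permMat e * A‖ * ‖(permMat f)ᵀ‖ := Matrix.l2_opNorm_mul _ _
    _ ≤ ‖permMat e‖ * ‖A‖ * ‖(permMat f)ᵀ‖ := by
        have := Matrix.l2_opNorm_mul (permMat e) A
        have h2 := norm_nonneg ((permMat f)ᵀ)
        nlinarith
    _ = ‖A‖ := by rw [norm_permMat, norm_permMat_transpose, one_mul, mul_one]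

end NormLemmas

section SymAvg

open scoped Matrix.Norms.L2Operator

variable {ι κ' : Type*} [Fintype ι] [DecidableEq ι] [Fintype κ'] [DecidableEq κ']

/-- Precomposition with a permutation, as an equivalence of tuples. -/
def tupleEquiv (π : Equiv.Perm ι) : (ι → κ') ≃ (ι → κ') where
  toFun I := I ∘ π
  invFun I := I ∘ π.symm
  left_inv I := by funext i; simp [Function.comp]
  right_inv I := by funext i; simp [Function.comp]

lemma symAvg_eq (M : Matrix (ι → κ') (ι → κ') ℝ) :
    symAvg M = (((Fintype.card (Equiv.Perm ι) : ℝ) ^ 2)⁻¹) •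
      ∑ π : Equiv.Perm ι, ∑ σ : Equiv.Perm ι,
        permMat (tupleEquiv (κ' := κ') π) * M * (permMat (tupleEquiv (κ' := κ') σ))ᵀ := by
  ext I J
  have hterm : ∀ π σ : Equiv.Perm ι,
      (permMat (tupleEquiv (κ' := κ') π) * M * (permMat (tupleEquiv (κ' := κ') σ))ᵀ) I J
        = M (I ∘ π) (J ∘ σ) := by
    intro π σ
    rw [mul_permMat_transpose, permMat_mul]
    rfl
  simp only [symAvg, Matrix.smul_apply, Matrix.sum_apply, hterm, smul_eq_mul]
  rw [div_eq_inv_mul]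

lemma norm_symAvg_le [Nonempty (ι → κ')] (M : Matrix (ι → κ') (ι → κ') ℝ) :
    ‖symAvg M‖ ≤ ‖M‖ := by
  have hcard : (0 : ℝ) < (Fintype.card (Equiv.Perm ι) : ℝ) := by
    exact_mod_cast Fintype.card_pos
  rw [symAvg_eq M, norm_smul]
  have hsum : ‖∑ π : Equiv.Perm ι, ∑ σ : Equiv.Perm ι,
      permMat (tupleEquiv (κ' := κ') π) * M * (permMat (tupleEquiv (κ' := κ') σ))ᵀ‖
        ≤ ((Fintype.card (Equiv.Perm ι) : ℝ)) ^ 2 * ‖M‖ := by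
    calc ‖∑ π : Equiv.Perm ι, ∑ σ : Equiv.Perm ι,
        permMat (tupleEquiv (κ' := κ') π) * M * (permMat (tupleEquiv (κ' := κ') σ))ᵀ‖
        ≤ ∑ π : Equiv.Perm ι, ‖∑ σ : Equiv.Perm ι,
            permMat (tupleEquiv (κ' := κ') π) * M * (permMat (tupleEquiv (κ' := κ') σ))ᵀ‖ :=
          norm_sum_le _ _
      _ ≤ ∑ _π : Equiv.Perm ι, ∑ _σ : Equiv.Perm ι, ‖M‖ := by
          refine Finset.sum_le_sum fun π _ => ?_
          refine (norm_sum_le _ _).trans (Finset.sum_le_sum fun σ _ => ?_)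
          exact norm_permMat_conj_le M _ _
      _ = ((Fintype.card (Equiv.Perm ι) : ℝ)) ^ 2 * ‖M‖ := by
          simp [Finset.sum_const, Finset.card_univ, nsmul_eq_mul]
          ring
  have h0 : ‖(((Fintype.card (Equiv.Perm ι) : ℝ)) ^ 2)⁻¹‖
      = (((Fintype.card (Equiv.Perm ι) : ℝ)) ^ 2)⁻¹ := by
    rw [Real.norm_eq_abs, abs_of_nonneg (by positivity)]
  rw [h0]
  calc (((Fintype.card (Equiv.Perm ι) : ℝ)) ^ 2)⁻¹ * ‖∑ π : Equiv.Perm ι, ∑ σ : Equiv.Perm ι,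
      permMat (tupleEquiv (κ' := κ') π) * M * (permMat (tupleEquiv (κ' := κ') σ))ᵀ‖
      ≤ (((Fintype.card (Equiv.Perm ι) : ℝ)) ^ 2)⁻¹
        * (((Fintype.card (Equiv.Perm ι) : ℝ)) ^ 2 * ‖M‖) := by
        exact mul_le_mul_of_nonneg_left hsum (by positivity)
    _ = ‖M‖ := by field_simp

end SymAvg

section Kron

open scoped Matrix.Norms.L2Operator

variable {α β : Type*} [Fintype α] [Fintype β] [DecidableEq α] [DecidableEq β]

lemma norm_kron_le (A : Matrix α α ℝ) (C : Matrix β β ℝ) :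
    ‖Matrix.kroneckerMap (· * ·) A C‖ ≤ ‖A‖ * ‖C‖ := by
  refine opNorm_le_bound _ (mul_nonneg (norm_nonneg A) (norm_nonneg C)) fun v => ?_
  have key : ∀ p : α × β, (Matrix.kroneckerMap (· * ·) A C *ᵥ v) p
      = (A *ᵥ fun j => (C *ᵥ fun l => v (j, l)) p.2) p.1 := by
    intro p
    simp only [Matrix.mulVec, dotProduct, Matrix.kroneckerMap_apply]
    rw [Fintype.sum_prod_type]
    simp_rw [Finset.mul_sum, mul_assoc]
  calc ∑ p : α × β, (Matrix.kroneckerMap (· * ·) A C *ᵥ v) p ^ 2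
      = ∑ k : β, ∑ i : α, ((A *ᵥ fun j => (C *ᵥ fun l => v (j, l)) k) i) ^ 2 := by
        rw [Fintype.sum_prod_type]
        rw [Finset.sum_comm]
        exact Finset.sum_congr rfl fun k _ => Finset.sum_congr rfl fun i _ => by rw [key (i, k)]
    _ ≤ ∑ k : β, ‖A‖ ^ 2 * ∑ j : α, ((C *ᵥ fun l => v (j, l)) k) ^ 2 :=
        Finset.sum_le_sum fun k _ => mulVec_sq_le A _
    _ = ‖A‖ ^ 2 * ∑ j : α, ∑ k : β, ((C *ᵥ fun l => v (j, l)) k) ^ 2 := by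
        rw [← Finset.mul_sum, Finset.sum_comm]
    _ ≤ ‖A‖ ^ 2 * ∑ j : α, (‖C‖ ^ 2 * ∑ l : β, v (j, l) ^ 2) := by
        refine mul_le_mul_of_nonneg_left (Finset.sum_le_sum fun j _ => ?_) (by positivity)
        exact mulVec_sq_le C _
    _ = (‖A‖ * ‖C‖) ^ 2 * ∑ p : α × β, v p ^ 2 := by
        rw [Fintype.sum_prod_type, ← Finset.mul_sum, mul_pow]
        ring

lemma norm_submatrix_le [Nonempty α]
    (A : Matrix β β ℝ) (e : α ≃ β) :
    ‖A.submatrix e e‖ ≤ ‖A‖ := by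
  have h : A.submatrix e e = permMat e * A * (permMat e)ᵀ := by
    rw [mul_permMat_transpose, permMat_mul]
    rfl
  rw [h]
  exact norm_permMat_conj_le A e e

/-- The equivalence splitting off the first coordinate of a tuple. -/
def consE (n m : ℕ) : (Fin (m + 1) → Fin n) ≃ (Fin n × (Fin m → Fin n)) where
  toFun I := (I 0, fun t => I t.succ)
  invFun p := Fin.cons p.1 p.2
  left_inv I := by
    funext t
    refine Fin.cases ?_ (fun s => ?_) t <;> simp
  right_inv p := by simp

lemma kronPow_succ {n m : ℕ} (B : Matrix (Fin n) (Fin n) ℝ) :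
    kronPow (m + 1) B =
      (Matrix.kroneckerMap (· * ·) B (kronPow m B)).submatrix (consE n m) (consE n m) := by
  ext I J
  simp only [kronPow, Matrix.submatrix_apply, Matrix.kroneckerMap_apply, consE,
    Equiv.coe_fn_mk, Fin.prod_univ_succ]

lemma kronPow_zero {n : ℕ} (B : Matrix (Fin n) (Fin n) ℝ) : kronPow 0 B = 1 := by
  ext I J
  simp [kronPow, Matrix.one_apply, Subsingleton.elim I J]

lemma norm_kronPow_le {n : ℕ} (hn : 0 < n) (m : ℕ) (B : Matrix (Fin n) (Fin n) ℝ) :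
    ‖kronPow m B‖ ≤ ‖B‖ ^ m := by
  haveI : Nonempty (Fin n) := ⟨⟨0, hn⟩⟩
  induction m with
  | zero =>
      rw [kronPow_zero, pow_zero, norm_matrix_one]
  | succ m ih =>
      rw [kronPow_succ]
      calc ‖(Matrix.kroneckerMap (· * ·) B (kronPow m B)).submatrix (consE n m) (consE n m)‖
          ≤ ‖Matrix.kroneckerMap (· * ·) B (kronPow m B)‖ := norm_submatrix_le _ _
        _ ≤ ‖B‖ * ‖kronPow m B‖ := norm_kron_le _ _
        _ ≤ ‖B‖ * ‖B‖ ^ m := mul_le_mul_of_nonneg_left ih (norm_nonneg B)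
        _ = ‖B‖ ^ (m + 1) := by rw [pow_succ]; ring

lemma norm_le_card {n : ℕ} (A : Matrix (Fin n) (Fin n) ℝ) (h : ∀ i j, |A i j| ≤ 1) :
    ‖A‖ ≤ (n : ℝ) := by
  refine opNorm_le_bound _ (Nat.cast_nonneg n) fun v => ?_
  have key : ∀ i, (A *ᵥ v) i ^ 2 ≤ (n : ℝ) * ∑ j, v j ^ 2 := by
    intro i
    have hcs := Finset.sum_mul_sq_le_sq_mul_sq Finset.univ (fun j => A i j) v
    have h1 : ∑ j, (A i j) ^ 2 ≤ (n : ℝ) := by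
      calc ∑ j, (A i j) ^ 2 ≤ ∑ _j : Fin n, (1 : ℝ) := by
            refine Finset.sum_le_sum fun j _ => ?_
            have := h i j
            nlinarith [abs_nonneg (A i j), sq_abs (A i j)]
        _ = (n : ℝ) := by simp
    have h2 : (A *ᵥ v) i = ∑ j, A i j * v j := rfl
    rw [h2]
    calc (∑ j, A i j * v j) ^ 2 ≤ (∑ j, (A i j) ^ 2) * ∑ j, v j ^ 2 := hcs
      _ ≤ (n : ℝ) * ∑ j, v j ^ 2 := by
          refine mul_le_mul_of_nonneg_right h1 ?_
          positivity
  calc ∑ i, (A *ᵥ v) i ^ 2 ≤ ∑ _i : Fin n, (n : ℝ) * ∑ j, v j ^ 2 :=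
        Finset.sum_le_sum fun i _ => key i
    _ = (n : ℝ) ^ 2 * ∑ j, v j ^ 2 := by
        rw [Finset.sum_const, Finset.card_univ, nsmul_eq_mul, Fintype.card_fin]
        ring

end Kron

section TraceBounds

open scoped Matrix.Norms.L2Operator

/-- The bilinear form `xᵀ A y`. -/
def bil {n : ℕ} (x y : EuclideanSpace ℝ (Fin n)) (A : Matrix (Fin n) (Fin n) ℝ) : ℝ :=
  ∑ i, ∑ j, x i * A i j * y j

lemma bil_sub_left {n : ℕ} (x x' y : EuclideanSpace ℝ (Fin n)) (A : Matrix (Fin n) (Fin n) ℝ) :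
    bil (x - x') y A = bil x y A - bil x' y A := by
  simp only [bil]
  rw [← Finset.sum_sub_distrib]
  refine Finset.sum_congr rfl fun i _ => ?_
  rw [← Finset.sum_sub_distrib]
  refine Finset.sum_congr rfl fun j _ => ?_
  have h : (x - x') i = x i - x' i := rfl
  rw [h]; ring

lemma bil_sub_right {n : ℕ} (x y y' : EuclideanSpace ℝ (Fin n)) (A : Matrix (Fin n) (Fin n) ℝ) :
    bil x (y - y') A = bil x y A - bil x y' A := by
  simp only [bil]
  rw [← Finset.sum_sub_distrib]
  refine Finset.sum_congr rfl fun i _ => ?_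
  rw [← Finset.sum_sub_distrib]
  refine Finset.sum_congr rfl fun j _ => ?_
  have h : (y - y') j = y j - y' j := rfl
  rw [h]; ring

lemma abs_bil_le {n : ℕ} (x y : EuclideanSpace ℝ (Fin n)) (A : Matrix (Fin n) (Fin n) ℝ) :
    |bil x y A| ≤ ‖x‖ * ‖A‖ * ‖y‖ := by
  have hb : bil x y A = ∑ i, x i * (A *ᵥ fun j => y j) i := by
    simp only [bil, Matrix.mulVec, dotProduct, Finset.mul_sum]
    exact Finset.sum_congr rfl fun i _ => Finset.sum_congr rfl fun j _ => by ring
  have hcs := Finset.sum_mul_sq_le_sq_mul_sq Finset.univ (fun i => x i)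
    (fun i => (A *ᵥ fun j => y j) i)
  have hA := mulVec_sq_le A (fun j => y j)
  have hx : ∑ i, x i ^ 2 = ‖x‖ ^ 2 := (euclNorm_sq x).symm
  have hy : ∑ j, y j ^ 2 = ‖y‖ ^ 2 := (euclNorm_sq y).symm
  refine le_of_sq_le_sq (by positivity) ?_ (abs_nonneg _)
  rw [sq_abs, hb]
  calc (∑ i, x i * (A *ᵥ fun j => y j) i) ^ 2
      ≤ (∑ i, x i ^ 2) * ∑ i, (A *ᵥ fun j => y j) i ^ 2 := hcs
    _ ≤ ‖x‖ ^ 2 * (‖A‖ ^ 2 * ‖y‖ ^ 2) := by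
        rw [hx]
        refine mul_le_mul_of_nonneg_left ?_ (by positivity)
        rw [← hy]
        exact hA
    _ = (‖x‖ * ‖A‖ * ‖y‖) ^ 2 := by ring

/-- Key deterministic estimate: trace in terms of the operator norm of `A`. -/
lemma abs_trace_le_norm_pow {n mm L : ℕ} (hn : 0 < n) (hL : 0 < L)
    (A : Matrix (Fin n) (Fin n) ℝ) :
    |((symAvg (kronPow mm A) * (symAvg (kronPow mm A))ᵀ) ^ L).trace|
      ≤ (n : ℝ) ^ mm * ‖A‖ ^ (2 * mm * L) := by
  haveI : Nonempty (Fin n) := ⟨⟨0, hn⟩⟩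
  set C := symAvg (kronPow mm A) with hC
  have hnormC : ‖C‖ ≤ ‖A‖ ^ mm := (norm_symAvg_le _).trans (norm_kronPow_le hn mm A)
  have h1 : |((C * Cᵀ) ^ L).trace| ≤ (Fintype.card (Fin mm → Fin n) : ℝ) * ‖(C * Cᵀ) ^ L‖ :=
    abs_trace_le _
  have hcard : (Fintype.card (Fin mm → Fin n) : ℝ) = (n : ℝ) ^ mm := by
    rw [Fintype.card_fun]
    push_cast [Fintype.card_fin]
    ring
  have h2 : ‖(C * Cᵀ) ^ L‖ ≤ ‖C * Cᵀ‖ ^ L := norm_pow_le' _ hL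
  have h3 : ‖C * Cᵀ‖ ≤ ‖C‖ * ‖C‖ := by
    refine (Matrix.l2_opNorm_mul _ _).trans ?_
    rw [norm_transpose]
  have h4 : ‖C‖ * ‖C‖ ≤ ‖A‖ ^ mm * ‖A‖ ^ mm := by
    nlinarith [norm_nonneg C, pow_nonneg (norm_nonneg A) mm]
  have h6 : (‖A‖ ^ mm * ‖A‖ ^ mm) ^ L = ‖A‖ ^ (2 * mm * L) := by
    rw [← pow_add, ← pow_mul]
    ring_nf
  calc |((C * Cᵀ) ^ L).trace|
      ≤ (Fintype.card (Fin mm → Fin n) : ℝ) * ‖(C * Cᵀ) ^ L‖ := h1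
    _ ≤ (n : ℝ) ^ mm * ‖A‖ ^ (2 * mm * L) := by
        rw [hcard, ← h6]
        refine mul_le_mul_of_nonneg_left ?_ (by positivity)
        exact h2.trans (pow_le_pow_left₀ (norm_nonneg _) (h3.trans h4) L)

/-- The operator norm is controlled by bilinear forms over a `1/4`-net of the ball. -/
lemma norm_le_two_mul_bil {n : ℕ} (hn : 0 < n) (A : Matrix (Fin n) (Fin n) ℝ)
    (T : Finset (EuclideanSpace ℝ (Fin n)))
    (hball : (T : Set (EuclideanSpace ℝ (Fin n))) ⊆ Metric.closedBall 0 1)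
    (hnet : ∀ z ∈ Metric.closedBall (0 : EuclideanSpace ℝ (Fin n)) 1, ∃ w ∈ T, dist z w ≤ 1/4) :
    ∃ x ∈ T, ∃ y ∈ T, ‖A‖ ≤ 2 * bil x y A := by
  classical
  haveI : Nonempty (Fin n) := ⟨⟨0, hn⟩⟩
  set g : EuclideanSpace ℝ (Fin n) → ℝ := fun yy => ∑ i, (∑ j, A i j * yy j) ^ 2 with hg
  have hgmv : ∀ yy : EuclideanSpace ℝ (Fin n), g yy = ∑ i, (A *ᵥ fun j => yy j) i ^ 2 :=
    fun yy => rfl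
  have hcont : Continuous g := by
    refine continuous_finset_sum _ fun i _ => ?_
    refine Continuous.pow ?_ 2
    refine continuous_finset_sum _ fun j _ => ?_
    have h : Continuous fun yy : EuclideanSpace ℝ (Fin n) => yy j :=
      (continuous_apply j).comp (PiLp.continuous_ofLp 2 fun _ : Fin n => ℝ)
    exact continuous_const.mul h
  obtain ⟨y0, hy0mem, hy0max⟩ :=
    (isCompact_closedBall (0 : EuclideanSpace ℝ (Fin n)) 1).exists_isMaxOn
      ⟨0, Metric.mem_closedBall_self (by norm_num)⟩ hcont.continuousOn
  have hgy0 : 0 ≤ g y0 := by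
    rw [hgmv]
    positivity
  set r := Real.sqrt (g y0) with hr
  have hr0 : 0 ≤ r := Real.sqrt_nonneg _
  have hrsq : r ^ 2 = g y0 := Real.sq_sqrt hgy0
  have hAr : ‖A‖ ≤ r := by
    refine opNorm_le_bound _ hr0 fun v => ?_
    rcases eq_or_lt_of_le (show (0:ℝ) ≤ ∑ j, v j ^ 2 by positivity) with hs | hs
    · have hv0 : ∀ j, v j = 0 := by
        intro j
        have h1 : ∀ j ∈ Finset.univ, (0:ℝ) ≤ v j ^ 2 := fun j _ => sq_nonneg _
        have h2 := (Finset.sum_eq_zero_iff_of_nonneg h1).1 hs.symm j (Finset.mem_univ j)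
        exact pow_eq_zero_iff two_ne_zero |>.1 h2
      have hAv : ∀ i, (A *ᵥ v) i = 0 := by
        intro i
        simp [Matrix.mulVec, dotProduct, hv0]
      have hz : ∑ i, (A *ᵥ v) i ^ 2 = 0 :=
        Finset.sum_eq_zero fun i _ => by rw [hAv i]; ring
      rw [hz]
      positivity
    · set s := ∑ j, v j ^ 2 with hs_def
      set w : EuclideanSpace ℝ (Fin n) :=
        (WithLp.equiv 2 (Fin n → ℝ)).symm ((Real.sqrt s)⁻¹ • v) with hw
      have hwc : ∀ j, w j = (Real.sqrt s)⁻¹ * v j := fun j => rfl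
      have hsqrt_s : Real.sqrt s ^ 2 = s := Real.sq_sqrt hs.le
      have hspos : 0 < Real.sqrt s := Real.sqrt_pos.2 hs
      have hwmem : w ∈ Metric.closedBall (0 : EuclideanSpace ℝ (Fin n)) 1 := by
        rw [Metric.mem_closedBall, dist_zero_right]
        refine le_of_sq_le_sq (by norm_num) ?_ (norm_nonneg _)
        rw [euclNorm_sq, one_pow]
        have : ∑ j, w j ^ 2 = (Real.sqrt s)⁻¹ ^ 2 * s := by
          simp_rw [hwc, mul_pow]
          rw [← Finset.mul_sum]
        rw [this, inv_pow, hsqrt_s, inv_mul_cancel₀ (ne_of_gt hs)]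
      have hgw : g w ≤ g y0 := hy0max hwmem
      have hgww : g w = (Real.sqrt s)⁻¹ ^ 2 * ∑ i, (A *ᵥ v) i ^ 2 := by
        rw [hg]
        simp only [hwc]
        rw [Finset.mul_sum]
        refine Finset.sum_congr rfl fun i _ => ?_
        have h5 : ∑ j, A i j * ((Real.sqrt s)⁻¹ * v j)
            = (Real.sqrt s)⁻¹ * ∑ j, A i j * v j := by
          rw [Finset.mul_sum]
          exact Finset.sum_congr rfl fun j _ => by ring
        rw [h5, mul_pow]
        rfl
      rw [hgww] at hgw
      have ht : (0:ℝ) < Real.sqrt s ^ 2 := by positivity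
      calc ∑ i, (A *ᵥ v) i ^ 2
          = (Real.sqrt s ^ 2) * ((Real.sqrt s)⁻¹ ^ 2 * ∑ i, (A *ᵥ v) i ^ 2) := by
            rw [inv_pow]
            field_simp
        _ ≤ (Real.sqrt s ^ 2) * g y0 := mul_le_mul_of_nonneg_left hgw (le_of_lt ht)
        _ = r ^ 2 * s := by rw [hsqrt_s, hrsq]; ring
  by_cases hA0 : ‖A‖ = 0
  · obtain ⟨w, hw, _⟩ := hnet 0 (Metric.mem_closedBall_self (by norm_num))
    refine ⟨w, hw, w, hw, ?_⟩
    have hAz : A = 0 := norm_eq_zero.1 hA0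
    rw [hA0, hAz]
    simp [bil]
  · have hApos : 0 < ‖A‖ := lt_of_le_of_ne (norm_nonneg A) (Ne.symm hA0)
    have hrpos : 0 < r := lt_of_lt_of_le hApos hAr
    set u : Fin n → ℝ := A *ᵥ fun j => y0 j with hu
    have husum : ∑ i, u i ^ 2 = g y0 := (hgmv y0).symm
    set x0 : EuclideanSpace ℝ (Fin n) := (WithLp.equiv 2 (Fin n → ℝ)).symm (r⁻¹ • u) with hx0
    have hx0c : ∀ i, x0 i = r⁻¹ * u i := fun i => rfl
    have hx0mem : x0 ∈ Metric.closedBall (0 : EuclideanSpace ℝ (Fin n)) 1 := by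
      rw [Metric.mem_closedBall, dist_zero_right]
      refine le_of_sq_le_sq (by norm_num) ?_ (norm_nonneg _)
      rw [euclNorm_sq, one_pow]
      have h7 : ∑ i, x0 i ^ 2 = r⁻¹ ^ 2 * ∑ i, u i ^ 2 := by
        simp_rw [hx0c, mul_pow]
        rw [← Finset.mul_sum]
      rw [h7, husum, ← hrsq, inv_pow]
      rw [inv_mul_cancel₀ (by positivity)]
    have hbil0 : bil x0 y0 A = r := by
      have h8 : bil x0 y0 A = ∑ i, x0 i * u i := by
        simp only [bil]
        refine Finset.sum_congr rfl fun i _ => ?_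
        have h9 : u i = ∑ j, A i j * y0 j := rfl
        rw [h9, Finset.mul_sum]
        exact Finset.sum_congr rfl fun j _ => by ring
      rw [h8]
      have h10 : ∑ i, x0 i * u i = r⁻¹ * ∑ i, u i ^ 2 := by
        rw [Finset.mul_sum]
        refine Finset.sum_congr rfl fun i _ => ?_
        rw [hx0c]
        ring
      rw [h10, husum, ← hrsq, sq]
      field_simp
    obtain ⟨x', hx'T, hx'd⟩ := hnet x0 hx0mem
    obtain ⟨y', hy'T, hy'd⟩ := hnet y0 hy0mem
    refine ⟨x', hx'T, y', hy'T, ?_⟩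
    have hdec : bil x' y' A = bil x0 y0 A - bil (x0 - x') y0 A - bil x' (y0 - y') A := by
      rw [bil_sub_left, bil_sub_right]
      ring
    have hy0n : ‖y0‖ ≤ 1 := by
      have := hy0mem
      rwa [Metric.mem_closedBall, dist_zero_right] at this
    have hx'n : ‖x'‖ ≤ 1 := by
      have := hball hx'T
      rwa [Metric.mem_closedBall, dist_zero_right] at this
    have e1 : |bil (x0 - x') y0 A| ≤ 1/4 * ‖A‖ := by
      refine (abs_bil_le _ _ _).trans ?_
      have h11 : ‖x0 - x'‖ ≤ 1/4 := by
        rw [← dist_eq_norm]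
        exact hx'd
      have h13 : ‖x0 - x'‖ * ‖A‖ * ‖y0‖ ≤ 1/4 * ‖A‖ * 1 := by
        refine mul_le_mul ?_ hy0n (norm_nonneg y0) (by positivity)
        exact mul_le_mul h11 le_rfl (norm_nonneg A) (by norm_num)
      linarith
    have e2 : |bil x' (y0 - y') A| ≤ 1/4 * ‖A‖ := by
      refine (abs_bil_le _ _ _).trans ?_
      have h12 : ‖y0 - y'‖ ≤ 1/4 := by
        rw [← dist_eq_norm]
        exact hy'd
      have h13 : ‖x'‖ * ‖A‖ * ‖y0 - y'‖ ≤ 1 * ‖A‖ * (1/4) := by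
        refine mul_le_mul ?_ h12 (norm_nonneg _) (by positivity)
        exact mul_le_mul hx'n le_rfl (norm_nonneg A) (by norm_num)
      linarith
    have n1 := neg_abs_le (bil (x0 - x') y0 A)
    have n2 := neg_abs_le (bil x' (y0 - y') A)
    have l1 := le_abs_self (bil (x0 - x') y0 A)
    have l2 := le_abs_self (bil x' (y0 - y') A)
    linarith [hdec, hbil0, hAr]

lemma trace_bound_of_bil {n mm L : ℕ} (hn : 0 < n) (hL : 0 < L)
    (A : Matrix (Fin n) (Fin n) ℝ)
    (T : Finset (EuclideanSpace ℝ (Fin n)))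
    (hball : (T : Set (EuclideanSpace ℝ (Fin n))) ⊆ Metric.closedBall 0 1)
    (hnet : ∀ z ∈ Metric.closedBall (0 : EuclideanSpace ℝ (Fin n)) 1, ∃ w ∈ T, dist z w ≤ 1/4)
    {t : ℝ} (ht : 0 ≤ t)
    (hb : ∀ x ∈ T, ∀ y ∈ T, bil x y A ≤ t) :
    |((symAvg (kronPow mm A) * (symAvg (kronPow mm A))ᵀ) ^ L).trace|
      ≤ (n : ℝ) ^ mm * (2 * t) ^ (2 * mm * L) := by
  obtain ⟨x, hx, y, hy, hA⟩ := norm_le_two_mul_bil hn A T hball hnet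
  have hA2 : ‖A‖ ≤ 2 * t := hA.trans (by linarith [hb x hx y hy])
  refine (abs_trace_le_norm_pow hn hL A).trans ?_
  refine mul_le_mul_of_nonneg_left ?_ (by positivity)
  exact pow_le_pow_left₀ (norm_nonneg A) hA2 _

lemma trace_bound_of_entries {n mm L : ℕ} (hn : 0 < n) (hL : 0 < L)
    (A : Matrix (Fin n) (Fin n) ℝ) (hent : ∀ i j, |A i j| ≤ 1) :
    |((symAvg (kronPow mm A) * (symAvg (kronPow mm A))ᵀ) ^ L).trace|
      ≤ (n : ℝ) ^ mm * (n : ℝ) ^ (2 * mm * L) := by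
  refine (abs_trace_le_norm_pow hn hL A).trans ?_
  refine mul_le_mul_of_nonneg_left ?_ (by positivity)
  exact pow_le_pow_left₀ (norm_nonneg A) (norm_le_card A hent) _

end TraceBounds

section Net

lemma exists_net (n : ℕ) (hn : 0 < n) :
    ∃ T : Finset (EuclideanSpace ℝ (Fin n)),
      (T : Set (EuclideanSpace ℝ (Fin n))) ⊆ Metric.closedBall 0 1 ∧
      T.card ≤ 9 ^ n ∧
      ∀ z ∈ Metric.closedBall (0 : EuclideanSpace ℝ (Fin n)) 1, ∃ w ∈ T, dist z w ≤ 1/4 := by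
  classical
  haveI : Nonempty (Fin n) := ⟨⟨0, hn⟩⟩
  -- cardinality bound for 1/4-separated subsets of the unit ball
  have key : ∀ S : Finset (EuclideanSpace ℝ (Fin n)),
      (S : Set (EuclideanSpace ℝ (Fin n))) ⊆ Metric.closedBall 0 1 →
      ((S : Set (EuclideanSpace ℝ (Fin n))).Pairwise fun a b => 1/4 < dist a b) →
      S.card ≤ 9 ^ n := by
    intro S hS hsep
    have hdisj : (S : Set (EuclideanSpace ℝ (Fin n))).PairwiseDisjoint
        fun s => Metric.ball s (1/8) := by
      intro a ha b hb hab
      have h := hsep ha hb hab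
      exact Metric.ball_disjoint_ball (by linarith)
    have hsub : ∀ s ∈ S, Metric.ball s (1/8)
        ⊆ Metric.ball (0 : EuclideanSpace ℝ (Fin n)) (9/8) := by
      intro s hs x hx
      have h1 : dist s 0 ≤ 1 := Metric.mem_closedBall.1 (hS hs)
      have h2 : dist x s < 1/8 := Metric.mem_ball.1 hx
      have h3 : dist x 0 < 9/8 := lt_of_le_of_lt (dist_triangle x s 0) (by linarith)
      exact Metric.mem_ball.2 h3
    have hvol : ∑ s ∈ S, volume (Metric.ball s (1/8))
        ≤ volume (Metric.ball (0 : EuclideanSpace ℝ (Fin n)) (9/8)) := by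
      rw [← measure_biUnion_finset hdisj (fun s _ => measurableSet_ball)]
      exact measure_mono (Set.iUnion₂_subset hsub)
    set V := volume (Metric.ball (0 : EuclideanSpace ℝ (Fin n)) 1) with hV
    have hVpos : 0 < V := Metric.measure_ball_pos _ _ (by norm_num)
    have hVfin : V < ⊤ := measure_ball_lt_top
    have hball18 : ∀ s : EuclideanSpace ℝ (Fin n),
        volume (Metric.ball s (1/8)) = ENNReal.ofReal ((1/8 : ℝ) ^ n) * V := by
      intro s
      rw [Measure.addHaar_ball volume s (by norm_num : (0:ℝ) ≤ 1/8), hV]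
      congr 2
      rw [finrank_euclideanSpace_fin]
    have hball98 : volume (Metric.ball (0 : EuclideanSpace ℝ (Fin n)) (9/8))
        = ENNReal.ofReal ((9/8 : ℝ) ^ n) * V := by
      rw [Measure.addHaar_ball volume _ (by norm_num : (0:ℝ) ≤ 9/8), hV]
      congr 2
      rw [finrank_euclideanSpace_fin]
    rw [hball98] at hvol
    rw [Finset.sum_congr rfl (fun s _ => hball18 s), Finset.sum_const, nsmul_eq_mul] at hvol
    -- cancel V
    have hcard : (S.card : ENNReal) * ENNReal.ofReal ((1/8 : ℝ) ^ n)
        ≤ ENNReal.ofReal ((9/8 : ℝ) ^ n) := by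
      rw [← mul_assoc] at hvol
      exact (ENNReal.mul_le_mul_iff_left (ne_of_gt hVpos) (ne_of_lt hVfin)).1 hvol
    have hmul := mul_le_mul_left hcard (ENNReal.ofReal ((8 : ℝ) ^ n))
    rw [mul_assoc, ← ENNReal.ofReal_mul (by positivity), ← ENNReal.ofReal_mul (by positivity)]
      at hmul
    have h18 : (1/8 : ℝ) ^ n * 8 ^ n = 1 := by
      rw [← mul_pow]
      norm_num
    have h98 : (9/8 : ℝ) ^ n * 8 ^ n = 9 ^ n := by
      rw [← mul_pow]
      norm_num
    rw [h18, h98, ENNReal.ofReal_one, mul_one] at hmul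
    have h9 : ENNReal.ofReal ((9 : ℝ) ^ n) = ((9 ^ n : ℕ) : ENNReal) := by
      rw [show ((9 : ℝ) ^ n) = ((9 ^ n : ℕ) : ℝ) by push_cast; ring, ENNReal.ofReal_natCast]
    rw [h9] at hmul
    exact_mod_cast hmul
  -- take a separated set of maximal cardinality
  set P : Finset (EuclideanSpace ℝ (Fin n)) → Prop := fun S =>
    (S : Set (EuclideanSpace ℝ (Fin n))) ⊆ Metric.closedBall 0 1 ∧
    ((S : Set (EuclideanSpace ℝ (Fin n))).Pairwise fun a b => 1/4 < dist a b) with hP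
  set A : Set ℕ := {c | ∃ S, P S ∧ S.card = c} with hA
  have hA0 : 0 ∈ A := ⟨∅, ⟨by simp, by simp⟩, rfl⟩
  have hbdd : BddAbove A := by
    refine ⟨9 ^ n, ?_⟩
    rintro c ⟨S, hPS, rfl⟩
    exact key S hPS.1 hPS.2
  obtain ⟨S, hPS, hcardS⟩ := Nat.sSup_mem ⟨0, hA0⟩ hbdd
  refine ⟨S, hPS.1, key S hPS.1 hPS.2, ?_⟩
  intro z hz
  by_contra hno
  push_neg at hno
  have hzS : z ∉ S := by
    intro hzS
    have h := hno z hzS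
    rw [dist_self] at h
    norm_num at h
  have hPins : P (insert z S) := by
    constructor
    · rw [Finset.coe_insert]
      exact Set.insert_subset hz hPS.1
    · rw [Finset.coe_insert]
      haveI : Std.Symm (fun a b : EuclideanSpace ℝ (Fin n) => (1:ℝ)/4 < dist a b) :=
        ⟨fun a b h => by rwa [dist_comm] at h⟩
      rw [Set.pairwise_insert_of_symm]
      refine ⟨hPS.2, fun b hb hne => ?_⟩
      exact hno b hb
  have hmem : S.card + 1 ∈ A := ⟨insert z S, hPins, Finset.card_insert_of_notMem hzS⟩
  have := le_csSup hbdd hmem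
  omega

end Net

section Prob

variable {Ω : Type*} [MeasurableSpace Ω] {μ : Measure Ω} [IsProbabilityMeasure μ]

lemma rademacher_union_ae {X : Ω → ℝ} (hX : Measurable X)
    (h1 : μ {ω | X ω = 1} = 1/2) (h2 : μ {ω | X ω = -1} = 1/2) :
    ∀ᵐ ω ∂μ, X ω = 1 ∨ X ω = -1 := by
  have hS1 : MeasurableSet {ω | X ω = 1} := hX (measurableSet_singleton 1)
  have hS2 : MeasurableSet {ω | X ω = -1} := hX (measurableSet_singleton (-1))
  have hdisj : Disjoint {ω | X ω = 1} {ω | X ω = -1} := by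
    rw [Set.disjoint_left]
    rintro ω hω1 hω2
    simp only [Set.mem_setOf_eq] at hω1 hω2
    rw [hω1] at hω2
    norm_num at hω2
  have hU : μ ({ω | X ω = 1} ∪ {ω | X ω = -1}) = 1 := by
    rw [measure_union hdisj hS2, h1, h2, ENNReal.add_halves]
  have hcompl : μ ({ω | X ω = 1} ∪ {ω | X ω = -1})ᶜ = 0 := by
    rw [measure_compl (hS1.union hS2) (measure_ne_top μ _), hU, measure_univ, tsub_self]
  have hmem : {ω | X ω = 1 ∨ X ω = -1} ∈ ae μ := by
    rw [mem_ae_iff]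
    have heq : {ω | X ω = 1 ∨ X ω = -1} = {ω | X ω = 1} ∪ {ω | X ω = -1} := rfl
    rw [heq]
    exact hcompl
  exact hmem

lemma rademacher_mgf_le {X : Ω → ℝ} (hX : Measurable X)
    (h1 : μ {ω | X ω = 1} = 1/2) (h2 : μ {ω | X ω = -1} = 1/2) (c t : ℝ) :
    mgf (fun ω => c * X ω) μ t ≤ Real.exp (t ^ 2 * c ^ 2 / 2) := by
  have hS1 : MeasurableSet {ω | X ω = 1} := hX (measurableSet_singleton 1)
  have hS2 : MeasurableSet {ω | X ω = -1} := hX (measurableSet_singleton (-1))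
  have hdisj : Disjoint {ω | X ω = 1} {ω | X ω = -1} := by
    rw [Set.disjoint_left]
    rintro ω hω1 hω2
    simp only [Set.mem_setOf_eq] at hω1 hω2
    rw [hω1] at hω2
    norm_num at hω2
  have hU : μ ({ω | X ω = 1} ∪ {ω | X ω = -1}) = 1 := by
    rw [measure_union hdisj hS2, h1, h2, ENNReal.add_halves]
  have hcompl : μ ({ω | X ω = 1} ∪ {ω | X ω = -1})ᶜ = 0 := by
    rw [measure_compl (hS1.union hS2) (measure_ne_top μ _), hU, measure_univ, tsub_self]
  have hae := rademacher_union_ae (μ := μ) hX h1 h2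
  have hint : Integrable (fun ω => Real.exp (t * (c * X ω))) μ := by
    refine Integrable.mono' (integrable_const (Real.exp |t * c|)) ?_ ?_
    · exact (((hX.const_mul c).const_mul t).exp).aestronglyMeasurable
    · filter_upwards [hae] with ω hω
      rw [Real.norm_eq_abs, abs_of_pos (Real.exp_pos _)]
      rcases hω with h | h <;> rw [h] <;> refine Real.exp_le_exp.2 ?_
      · calc t * (c * 1) = t * c := by ring
          _ ≤ |t * c| := le_abs_self _
      · calc t * (c * -1) = -(t * c) := by ring
          _ ≤ |t * c| := neg_le_abs _
  have hsplit : mgf (fun ω => c * X ω) μ t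
      = (∫ ω in {ω | X ω = 1}, Real.exp (t * (c * X ω)) ∂μ)
        + ∫ ω in {ω | X ω = -1}, Real.exp (t * (c * X ω)) ∂μ := by
    rw [mgf]
    rw [← integral_add_compl (hS1.union hS2) hint]
    rw [setIntegral_measure_zero _ hcompl, add_zero]
    exact setIntegral_union hdisj hS2 hint.integrableOn hint.integrableOn
  have htoReal : ∀ s : Set Ω, μ s = 1/2 → (μ s).toReal = 1/2 := by
    intro s hs
    rw [hs]
    simp [ENNReal.toReal_div]
  have e1 : ∫ ω in {ω | X ω = 1}, Real.exp (t * (c * X ω)) ∂μ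
      = Real.exp (t * c) * (1/2) := by
    rw [setIntegral_congr_fun hS1 (g := fun _ => Real.exp (t * c))
      (fun ω hω => by rw [Set.mem_setOf_eq] at hω; rw [hω, mul_one])]
    rw [setIntegral_const, measureReal_def, htoReal _ h1, smul_eq_mul]
    ring
  have e2 : ∫ ω in {ω | X ω = -1}, Real.exp (t * (c * X ω)) ∂μ
      = Real.exp (-(t * c)) * (1/2) := by
    rw [setIntegral_congr_fun hS2 (g := fun _ => Real.exp (-(t * c)))
      (fun ω hω => by rw [Set.mem_setOf_eq] at hω; rw [hω]; ring_nf)]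
    rw [setIntegral_const, measureReal_def, htoReal _ h2, smul_eq_mul]
    ring
  rw [hsplit, e1, e2]
  have hcosh := Real.cosh_le_exp_half_sq (t * c)
  rw [Real.cosh_eq] at hcosh
  calc Real.exp (t * c) * (1/2) + Real.exp (-(t * c)) * (1/2)
      = (Real.exp (t * c) + Real.exp (-(t * c))) / 2 := by ring
    _ ≤ Real.exp ((t * c) ^ 2 / 2) := hcosh
    _ = Real.exp (t ^ 2 * c ^ 2 / 2) := by ring_nf

lemma bil_tail {n : ℕ} (hn : 0 < n)
    (B : Ω → Matrix (Fin n) (Fin n) ℝ)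
    (hMeas : ∀ i j, Measurable fun ω => B ω i j)
    (hIndep : iIndepFun
      (fun (p : Fin n × Fin n) ω => B ω p.1 p.2) μ)
    (hRademacher : ∀ i j, μ {ω | B ω i j = 1} = 1/2 ∧ μ {ω | B ω i j = -1} = 1/2)
    (x y : EuclideanSpace ℝ (Fin n)) (hx : ∑ i, x i ^ 2 ≤ 1) (hy : ∑ j, y j ^ 2 ≤ 1) :
    (μ {ω | 8 * Real.sqrt n ≤ bil x y (B ω)}).toReal ≤ Real.exp (-(32 * n)) := by
  classical
  set t : ℝ := 8 * Real.sqrt n with ht_def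
  have ht : 0 ≤ t := by positivity
  set c : Fin n × Fin n → ℝ := fun p => x p.1 * y p.2 with hc
  set X : (Fin n × Fin n) → Ω → ℝ := fun p ω => c p * B ω p.1 p.2 with hXdef
  have hmeasX : ∀ p, Measurable (X p) := fun p => (hMeas p.1 p.2).const_mul _
  have hindep : iIndepFun X μ :=
    hIndep.comp (fun p (r : ℝ) => c p * r) (fun p => measurable_id.const_mul (c p))
  have hsum : ∀ ω, bil x y (B ω) = (∑ p : Fin n × Fin n, X p) ω := by
    intro ω
    rw [Finset.sum_apply]
    simp only [hXdef, hc, bil]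
    rw [Fintype.sum_prod_type]
    exact Finset.sum_congr rfl fun i _ => Finset.sum_congr rfl fun j _ => by ring
  have hset : {ω | t ≤ bil x y (B ω)} = {ω | t ≤ (∑ p : Fin n × Fin n, X p) ω} := by
    ext ω
    rw [Set.mem_setOf_eq, Set.mem_setOf_eq, hsum]
  have haeB : ∀ᵐ ω ∂μ, ∀ p : Fin n × Fin n, |B ω p.1 p.2| ≤ 1 := by
    rw [ae_all_iff]
    intro p
    filter_upwards [rademacher_union_ae (hMeas p.1 p.2) (hRademacher p.1 p.2).1
      (hRademacher p.1 p.2).2] with ω hω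
    rcases hω with h | h <;> rw [h] <;> norm_num
  have hSmeas : Measurable fun ω => (∑ p : Fin n × Fin n, X p) ω := by
    simp only [Finset.sum_apply]
    exact Finset.measurable_sum _ fun p _ => hmeasX p
  have hint : Integrable (fun ω => Real.exp (t * (∑ p : Fin n × Fin n, X p) ω)) μ := by
    refine Integrable.mono' (integrable_const (Real.exp (|t| * ∑ p : Fin n × Fin n, |c p|)))
      ((hSmeas.const_mul t).exp).aestronglyMeasurable ?_
    filter_upwards [haeB] with ω hω
    rw [Real.norm_eq_abs, abs_of_pos (Real.exp_pos _)]
    refine Real.exp_le_exp.2 ?_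
    have hb : |(∑ p : Fin n × Fin n, X p) ω| ≤ ∑ p : Fin n × Fin n, |c p| := by
      rw [Finset.sum_apply]
      refine (Finset.abs_sum_le_sum_abs _ _).trans (Finset.sum_le_sum fun p _ => ?_)
      rw [hXdef, abs_mul]
      calc |c p| * |B ω p.1 p.2| ≤ |c p| * 1 :=
            mul_le_mul_of_nonneg_left (hω p) (abs_nonneg _)
        _ = |c p| := mul_one _
    calc t * (∑ p : Fin n × Fin n, X p) ω ≤ |t * (∑ p : Fin n × Fin n, X p) ω| := le_abs_self _
      _ = |t| * |(∑ p : Fin n × Fin n, X p) ω| := abs_mul _ _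
      _ ≤ |t| * ∑ p : Fin n × Fin n, |c p| :=
          mul_le_mul_of_nonneg_left hb (abs_nonneg t)
  have hch := measure_ge_le_exp_mul_mgf (μ := μ) (X := ∑ p : Fin n × Fin n, X p)
    (t := t) t ht hint
  have hmgf : mgf (∑ p : Fin n × Fin n, X p) μ t ≤ Real.exp (t ^ 2 / 2) := by
    rw [hindep.mgf_sum hmeasX Finset.univ]
    have hcsum : ∑ p : Fin n × Fin n, (c p) ^ 2 ≤ 1 := by
      have hprod : ∑ p : Fin n × Fin n, (c p) ^ 2 = (∑ i, x i ^ 2) * ∑ j, y j ^ 2 := by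
        rw [Finset.sum_mul_sum, Fintype.sum_prod_type]
        exact Finset.sum_congr rfl fun i _ => Finset.sum_congr rfl fun j _ => by
          rw [hc]; ring
      rw [hprod]
      have hx0 : (0:ℝ) ≤ ∑ i, x i ^ 2 := by positivity
      have hy0 : (0:ℝ) ≤ ∑ j, y j ^ 2 := by positivity
      nlinarith
    calc ∏ p : Fin n × Fin n, mgf (X p) μ t
        ≤ ∏ p : Fin n × Fin n, Real.exp (t ^ 2 * (c p) ^ 2 / 2) := by
          refine Finset.prod_le_prod (fun p _ => mgf_nonneg) fun p _ => ?_
          exact rademacher_mgf_le (hMeas p.1 p.2) (hRademacher p.1 p.2).1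
            (hRademacher p.1 p.2).2 (c p) t
      _ = Real.exp (∑ p : Fin n × Fin n, t ^ 2 * (c p) ^ 2 / 2) := by
          rw [Real.exp_sum]
      _ ≤ Real.exp (t ^ 2 / 2) := by
          refine Real.exp_le_exp.2 ?_
          have heq : ∑ p : Fin n × Fin n, t ^ 2 * (c p) ^ 2 / 2
              = t ^ 2 / 2 * ∑ p : Fin n × Fin n, (c p) ^ 2 := by
            rw [Finset.mul_sum]
            exact Finset.sum_congr rfl fun p _ => by ring
          rw [heq]
          calc t ^ 2 / 2 * ∑ p : Fin n × Fin n, (c p) ^ 2 ≤ t ^ 2 / 2 * 1 :=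
                mul_le_mul_of_nonneg_left hcsum (by positivity)
            _ = t ^ 2 / 2 := mul_one _
  have htsq : t ^ 2 = 64 * n := by
    rw [ht_def, mul_pow, Real.sq_sqrt (Nat.cast_nonneg n)]
    ring
  rw [hset]
  calc (μ {ω | t ≤ (∑ p : Fin n × Fin n, X p) ω}).toReal
      ≤ Real.exp (-t * t) * mgf (∑ p : Fin n × Fin n, X p) μ t := hch
    _ ≤ Real.exp (-t * t) * Real.exp (t ^ 2 / 2) :=
        mul_le_mul_of_nonneg_left hmgf (le_of_lt (Real.exp_pos _))
    _ = Real.exp (-t * t + t ^ 2 / 2) := (Real.exp_add _ _).symm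
    _ = Real.exp (-(32 * n)) := by
        congr 1
        have h2 : -t * t + t ^ 2 / 2 = -(t ^ 2) / 2 := by ring
        rw [h2, htsq]
        ring

end Prob

end KronProof

/-- If `B` is an `n × n` random matrix with i.i.d. Rademacher entries and
`C' = E_{Π,Σ∈Ŝ_{dk/2}}[Π B^{⊗dk/2} Σ]`, then
`E[Tr((C' C'ᵀ)^ℓ)] ≤ 2^{4dkℓ+1} · n^{dkℓ/2 + dk/2}`. -/
theorem expected_trace_symAvg_kronPow_rademacher
    (n d k L m : ℕ) (hn : 0 < n) (hd : 0 < d) (hk : 0 < k) (hL : 0 < L)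
    (hm : d * k = 2 * m)
    (hcond : (2 * d * k * L : ℝ) * Real.log n ≤ (n : ℝ))
    {Ω : Type*} [MeasurableSpace Ω] (μ : Measure Ω) [IsProbabilityMeasure μ]
    (B : Ω → Matrix (Fin n) (Fin n) ℝ)
    (hMeas : ∀ i j, Measurable fun ω => B ω i j)
    (hIndep : iIndepFun
      (fun (p : Fin n × Fin n) ω => B ω p.1 p.2) μ)
    (hRademacher : ∀ i j, μ {ω | B ω i j = 1} = 1/2 ∧ μ {ω | B ω i j = -1} = 1/2) :
    ∫ ω, ((symAvg (kronPow m (B ω)) * (symAvg (kronPow m (B ω)))ᵀ) ^ L).trace ∂μ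
      ≤ 2 ^ (4 * d * k * L + 1) * (n : ℝ) ^ (m * L + m) := by
  classical
  obtain ⟨T, hball, hcard, hnet⟩ := KronProof.exists_net n hn
  have hm1 : 0 < m := by
    have h1 : 0 < d * k := Nat.mul_pos hd hk
    omega
  set f : Ω → ℝ := fun ω =>
    ((symAvg (kronPow m (B ω)) * (symAvg (kronPow m (B ω)))ᵀ) ^ L).trace with hfdef
  -- measurability of f
  have hFcont : Continuous fun A : Matrix (Fin n) (Fin n) ℝ =>
      ((symAvg (kronPow m A) * (symAvg (kronPow m A))ᵀ) ^ L).trace := by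
    have hk' : Continuous fun A : Matrix (Fin n) (Fin n) ℝ => kronPow m A := by
      refine continuous_matrix fun I J => ?_
      simp only [kronPow]
      refine continuous_finset_prod _ fun tt _ => ?_
      exact (continuous_apply (J tt)).comp (continuous_apply (I tt))
    have hs : Continuous fun A : Matrix (Fin n) (Fin n) ℝ => symAvg (kronPow m A) := by
      refine continuous_matrix fun I J => ?_
      simp only [symAvg]
      refine Continuous.div_const ?_ _
      refine continuous_finset_sum _ fun π _ => ?_
      refine continuous_finset_sum _ fun σ _ => ?_
      exact (continuous_apply (J ∘ σ)).comp ((continuous_apply (I ∘ π)).comp hk')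
    have hmul : Continuous fun A : Matrix (Fin n) (Fin n) ℝ =>
        symAvg (kronPow m A) * (symAvg (kronPow m A))ᵀ := hs.matrix_mul hs.matrix_transpose
    have hpow : ∀ K : ℕ, Continuous fun A : Matrix (Fin n) (Fin n) ℝ =>
        (symAvg (kronPow m A) * (symAvg (kronPow m A))ᵀ) ^ K := by
      intro K
      induction K with
      | zero => simpa using continuous_const
      | succ K ih =>
          simp only [pow_succ]
          exact ih.matrix_mul hmul
    exact (hpow L).matrix_trace
  have hmeasf : Measurable f := by
    have hG' : Continuous (fun A : (Fin n → Fin n → ℝ) =>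
        ((symAvg (kronPow m A) * (symAvg (kronPow m A))ᵀ) ^ L).trace) := hFcont
    have hB' : Measurable (fun ω (i j : Fin n) => B ω i j) :=
      measurable_pi_lambda _ fun i => measurable_pi_lambda _ fun j => hMeas i j
    exact hG'.measurable.comp hB' 
  -- a.s. bounded entries
  have haeEnt : ∀ᵐ ω ∂μ, ∀ i j, |B ω i j| ≤ 1 := by
    rw [ae_all_iff]
    intro i
    rw [ae_all_iff]
    intro j
    filter_upwards [KronProof.rademacher_union_ae (hMeas i j) (hRademacher i j).1
      (hRademacher i j).2] with ω hω
    rcases hω with h | h <;> rw [h] <;> norm_num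
  have hDet2 : ∀ᵐ ω ∂μ, |f ω| ≤ (n : ℝ) ^ m * (n : ℝ) ^ (2 * m * L) := by
    filter_upwards [haeEnt] with ω hω
    exact KronProof.trace_bound_of_entries hn hL (B ω) hω
  have hintf : Integrable f μ := by
    refine Integrable.mono' (integrable_const ((n : ℝ) ^ m * (n : ℝ) ^ (2 * m * L)))
      hmeasf.aestronglyMeasurable ?_
    filter_upwards [hDet2] with ω hω
    rwa [Real.norm_eq_abs]
  -- good event
  set G : Set Ω := {ω | ∀ x ∈ T, ∀ y ∈ T, KronProof.bil x y (B ω) < 8 * Real.sqrt n} with hGdef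
  have hbilmeas : ∀ x y : EuclideanSpace ℝ (Fin n),
      Measurable fun ω => KronProof.bil x y (B ω) := by
    intro x y
    simp only [KronProof.bil]
    refine Finset.measurable_sum _ fun i _ => Finset.measurable_sum _ fun j _ => ?_
    exact ((hMeas i j).const_mul (x i)).mul_const (y j)
  have hGmeas : MeasurableSet G := by
    have hGeq : G = ⋂ x ∈ T, ⋂ y ∈ T,
        {ω | KronProof.bil x y (B ω) < 8 * Real.sqrt n} := by
      ext ω
      simp [hGdef]
    rw [hGeq]
    refine MeasurableSet.biInter T.countable_toSet fun x _ => ?_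
    refine MeasurableSet.biInter T.countable_toSet fun y _ => ?_
    exact measurableSet_lt (hbilmeas x y) measurable_const
  -- tail bound
  have hTnorm : ∀ x ∈ T, ∑ i, x i ^ 2 ≤ 1 := by
    intro x hx
    have h1 := hball hx
    rw [Metric.mem_closedBall, dist_zero_right] at h1
    have h2 := KronProof.euclNorm_sq x
    nlinarith [norm_nonneg x]
  have htail : (μ Gᶜ).toReal ≤ 81 ^ n * Real.exp (-(32 * n)) := by
    have hsub : Gᶜ ⊆ ⋃ x ∈ T, ⋃ y ∈ T,
        {ω | 8 * Real.sqrt n ≤ KronProof.bil x y (B ω)} := by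
      intro ω hω
      simp only [hGdef, Set.mem_compl_iff, Set.mem_setOf_eq, not_forall, not_lt] at hω
      obtain ⟨x, hx, y, hy, hle⟩ := hω
      exact Set.mem_biUnion hx (Set.mem_biUnion hy hle)
    have h1 : μ Gᶜ ≤ ∑ x ∈ T, ∑ y ∈ T,
        μ {ω | 8 * Real.sqrt n ≤ KronProof.bil x y (B ω)} := by
      calc μ Gᶜ ≤ μ (⋃ x ∈ T, ⋃ y ∈ T,
          {ω | 8 * Real.sqrt n ≤ KronProof.bil x y (B ω)}) := measure_mono hsub
        _ ≤ ∑ x ∈ T, μ (⋃ y ∈ T,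
            {ω | 8 * Real.sqrt n ≤ KronProof.bil x y (B ω)}) := measure_biUnion_finset_le _ _
        _ ≤ ∑ x ∈ T, ∑ y ∈ T, μ {ω | 8 * Real.sqrt n ≤ KronProof.bil x y (B ω)} :=
            Finset.sum_le_sum fun x _ => measure_biUnion_finset_le _ _
    have hne : (∑ x ∈ T, ∑ y ∈ T,
        μ {ω | 8 * Real.sqrt n ≤ KronProof.bil x y (B ω)}) ≠ ⊤ := by
      refine (ENNReal.sum_lt_top.2 fun x _ => ?_).ne
      exact ENNReal.sum_lt_top.2 fun y _ => measure_lt_top μ _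
    have h2 : (μ Gᶜ).toReal ≤ ∑ x ∈ T, ∑ y ∈ T,
        (μ {ω | 8 * Real.sqrt n ≤ KronProof.bil x y (B ω)}).toReal := by
      refine (ENNReal.toReal_mono hne h1).trans_eq ?_
      rw [ENNReal.toReal_sum fun x _ => by
        exact (ENNReal.sum_lt_top.2 fun y _ => measure_lt_top μ _).ne]
      exact Finset.sum_congr rfl fun x _ =>
        ENNReal.toReal_sum fun y _ => (measure_lt_top μ _).ne
    refine h2.trans ?_
    have h3 : ∀ x ∈ T, ∀ y ∈ T,
        (μ {ω | 8 * Real.sqrt n ≤ KronProof.bil x y (B ω)}).toReal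
          ≤ Real.exp (-(32 * n)) := by
      intro x hx y hy
      exact KronProof.bil_tail hn B hMeas hIndep hRademacher x y (hTnorm x hx) (hTnorm y hy)
    calc ∑ x ∈ T, ∑ y ∈ T,
        (μ {ω | 8 * Real.sqrt n ≤ KronProof.bil x y (B ω)}).toReal
        ≤ ∑ _x ∈ T, ∑ _y ∈ T, Real.exp (-(32 * n)) :=
          Finset.sum_le_sum fun x hx => Finset.sum_le_sum fun y hy => h3 x hx y hy
      _ = (T.card : ℝ) * ((T.card : ℝ) * Real.exp (-(32 * n))) := by
          rw [Finset.sum_const, Finset.sum_const, nsmul_eq_mul, nsmul_eq_mul]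
      _ ≤ (9 : ℝ) ^ n * ((9 : ℝ) ^ n * Real.exp (-(32 * n))) := by
          have hc : (T.card : ℝ) ≤ (9 : ℝ) ^ n := by exact_mod_cast hcard
          have he := Real.exp_pos (-(32 * (n:ℝ)))
          refine mul_le_mul hc (mul_le_mul_of_nonneg_right hc he.le) (by positivity)
            (by positivity)
      _ = 81 ^ n * Real.exp (-(32 * n)) := by
          rw [show (81 : ℝ) = 9 * 9 by norm_num, mul_pow]
          ring
  -- split the integral
  have hsplit : ∫ ω, f ω ∂μ = (∫ ω in G, f ω ∂μ) + ∫ ω in Gᶜ, f ω ∂μ :=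
    (integral_add_compl hGmeas hintf).symm
  -- bound on G
  set C1 : ℝ := (n : ℝ) ^ m * (16 * Real.sqrt n) ^ (2 * m * L) with hC1def
  have hIG : ‖∫ ω in G, f ω ∂μ‖ ≤ C1 * (μ G).toReal := by
    refine norm_setIntegral_le_of_norm_le_const_ae' (measure_lt_top μ G) ?_
    refine Filter.Eventually.of_forall fun ω hω => ?_
    rw [Real.norm_eq_abs]
    have hb : ∀ x ∈ T, ∀ y ∈ T, KronProof.bil x y (B ω) ≤ 8 * Real.sqrt n :=
      fun x hx y hy => (hω x hx y hy).le
    have h4 := KronProof.trace_bound_of_bil (mm := m) hn hL (B ω) T hball hnet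
      (t := 8 * Real.sqrt n) (by positivity) hb
    calc |f ω| ≤ (n : ℝ) ^ m * (2 * (8 * Real.sqrt n)) ^ (2 * m * L) := h4
      _ = C1 := by rw [hC1def, show 2 * (8 * Real.sqrt n) = 16 * Real.sqrt n by ring]
  -- bound on Gᶜ
  set D : ℝ := (n : ℝ) ^ m * (n : ℝ) ^ (2 * m * L) with hDdef
  have hIGc : ‖∫ ω in Gᶜ, f ω ∂μ‖ ≤ D * (μ Gᶜ).toReal := by
    refine norm_setIntegral_le_of_norm_le_const_ae' (measure_lt_top μ Gᶜ) ?_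
    filter_upwards [hDet2] with ω hω _
    rwa [Real.norm_eq_abs]
  -- numeric identities
  have hsqrtsq : (Real.sqrt n) ^ 2 = (n : ℝ) := Real.sq_sqrt (Nat.cast_nonneg n)
  have hC1eq : C1 = 2 ^ (8 * (m * L)) * (n : ℝ) ^ (m * L + m) := by
    rw [hC1def]
    have h1 : (16 * Real.sqrt n : ℝ) ^ (2 * m * L)
        = 16 ^ (2 * m * L) * (Real.sqrt n) ^ (2 * m * L) := mul_pow _ _ _
    have h2 : (Real.sqrt n : ℝ) ^ (2 * m * L) = (n : ℝ) ^ (m * L) := by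
      rw [show 2 * m * L = 2 * (m * L) by ring, pow_mul, hsqrtsq]
    have h3 : (16 : ℝ) ^ (2 * m * L) = 2 ^ (8 * (m * L)) := by
      rw [show (16 : ℝ) = 2 ^ 4 by norm_num, ← pow_mul, show 4 * (2 * m * L) = 8 * (m * L) by ring]
    rw [h1, h2, h3, pow_add]
    ring
  have hDeq : D = (n : ℝ) ^ (m * L + m) * (n : ℝ) ^ (m * L) := by
    rw [hDdef, ← pow_add, ← pow_add]
    congr 1
    ring
  have hn1 : (1 : ℝ) ≤ (n : ℝ) := by exact_mod_cast hn
  -- key: n^(mL) * 81^n * exp(-(32n)) ≤ 1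
  have hkey : (n : ℝ) ^ (m * L) * (81 ^ n * Real.exp (-(32 * n))) ≤ 1 := by
    have hdk : ((d : ℝ) * k) = 2 * (m : ℝ) := by exact_mod_cast hm
    have hc2 : 4 * ((m : ℝ) * L) * Real.log n ≤ n := by
      have heq : 2 * (d : ℝ) * k * L = 4 * ((m : ℝ) * L) := by
        calc 2 * (d : ℝ) * k * L = 2 * ((d : ℝ) * k) * L := by ring
          _ = 2 * (2 * (m : ℝ)) * L := by rw [hdk]
          _ = 4 * ((m : ℝ) * L) := by ring
      calc 4 * ((m : ℝ) * L) * Real.log n = 2 * (d : ℝ) * k * L * Real.log n := by rw [heq]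
        _ ≤ n := hcond
    have hpowexp : (n : ℝ) ^ (m * L) ≤ Real.exp ((n : ℝ) / 4) := by
      have h5 : (n : ℝ) ^ (m * L) = Real.exp (((m * L : ℕ) : ℝ) * Real.log n) := by
        rw [← Real.log_pow, Real.exp_log (by positivity)]
      rw [h5]
      refine Real.exp_le_exp.2 ?_
      have : ((m * L : ℕ) : ℝ) = (m : ℝ) * L := by push_cast; ring
      rw [this]
      linarith
    have h81 : (81 : ℝ) ^ n ≤ Real.exp (5 * n) := by
      have he5 : (81 : ℝ) ≤ Real.exp 5 := by
        have h1 := Real.exp_one_gt_d9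
        have h2 : (2.7182818283 : ℝ) ^ 5 ≤ (Real.exp 1) ^ 5 :=
          pow_le_pow_left₀ (by norm_num) h1.le 5
        have h3 : (81 : ℝ) ≤ (2.7182818283 : ℝ) ^ 5 := by norm_num
        have h4 : (Real.exp 1) ^ 5 = Real.exp 5 := by
          rw [← Real.exp_nat_mul]
          norm_num
        linarith
      calc (81 : ℝ) ^ n ≤ (Real.exp 5) ^ n := pow_le_pow_left₀ (by norm_num) he5 n
        _ = Real.exp ((n : ℕ) * 5) := (Real.exp_nat_mul 5 n).symm
        _ = Real.exp (5 * n) := by rw [mul_comm]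
    have hexp0 : (0:ℝ) < Real.exp (-(32 * n)) := Real.exp_pos _
    have hp0 : (0:ℝ) ≤ (n : ℝ) ^ (m * L) := by positivity
    calc (n : ℝ) ^ (m * L) * (81 ^ n * Real.exp (-(32 * n)))
        ≤ Real.exp ((n : ℝ) / 4) * (Real.exp (5 * n) * Real.exp (-(32 * n))) := by
          have h6 : (81:ℝ) ^ n * Real.exp (-(32 * n)) ≤ Real.exp (5 * n) * Real.exp (-(32 * n)) :=
            mul_le_mul_of_nonneg_right h81 hexp0.le
          have h7 : (0:ℝ) ≤ (81:ℝ) ^ n * Real.exp (-(32 * n)) := by positivity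
          exact mul_le_mul hpowexp h6 h7 (Real.exp_pos _).le
      _ = Real.exp ((n : ℝ) / 4 + 5 * n + -(32 * n)) := by
          rw [← Real.exp_add, ← Real.exp_add, add_assoc]
      _ ≤ 1 := by
          rw [Real.exp_le_one_iff]
          have : (0:ℝ) ≤ (n:ℝ) := Nat.cast_nonneg n
          linarith
  -- final combination
  have h8 : 4 * d * k * L + 1 = 8 * (m * L) + 1 := by
    have : 4 * d * k * L = 8 * (m * L) := by
      calc 4 * d * k * L = 4 * (d * k) * L := by ring
        _ = 4 * (2 * m) * L := by rw [hm]
        _ = 8 * (m * L) := by ring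
    omega
  have hGle1 : (μ G).toReal ≤ 1 := by
    rw [← ENNReal.toReal_one]
    exact ENNReal.toReal_mono ENNReal.one_ne_top prob_le_one
  have hC1pos : 0 ≤ C1 := by rw [hC1def]; positivity
  have hDpos : 0 ≤ D := by rw [hDdef]; positivity
  have hfinal : ∫ ω, f ω ∂μ ≤ 2 ^ (8 * (m * L)) * (n : ℝ) ^ (m * L + m)
      + (n : ℝ) ^ (m * L + m) * 2 ^ (8 * (m * L)) := by
    rw [hsplit]
    have hstep1 : (∫ ω in G, f ω ∂μ) + ∫ ω in Gᶜ, f ω ∂μ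
        ≤ C1 * (μ G).toReal + D * (μ Gᶜ).toReal := by
      rw [Real.norm_eq_abs] at hIG hIGc
      have l1 := (le_abs_self (∫ ω in G, f ω ∂μ)).trans hIG
      have l2 := (le_abs_self (∫ ω in Gᶜ, f ω ∂μ)).trans hIGc
      linarith
    refine hstep1.trans ?_
    have hpart1 : C1 * (μ G).toReal ≤ 2 ^ (8 * (m * L)) * (n : ℝ) ^ (m * L + m) := by
      calc C1 * (μ G).toReal ≤ C1 * 1 := mul_le_mul_of_nonneg_left hGle1 hC1pos
        _ = C1 := mul_one _
        _ = 2 ^ (8 * (m * L)) * (n : ℝ) ^ (m * L + m) := hC1eq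
    have hpart2 : D * (μ Gᶜ).toReal ≤ (n : ℝ) ^ (m * L + m) * 2 ^ (8 * (m * L)) := by
      calc D * (μ Gᶜ).toReal ≤ D * (81 ^ n * Real.exp (-(32 * n))) := by
            refine mul_le_mul_of_nonneg_left ?_ hDpos
            exact htail
        _ = (n : ℝ) ^ (m * L + m) * ((n : ℝ) ^ (m * L) * (81 ^ n * Real.exp (-(32 * n)))) := by
            rw [hDeq]; ring
        _ ≤ (n : ℝ) ^ (m * L + m) * 1 := by
            refine mul_le_mul_of_nonneg_left hkey (by positivity)
        _ ≤ (n : ℝ) ^ (m * L + m) * 2 ^ (8 * (m * L)) := by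
            refine mul_le_mul_of_nonneg_left ?_ (by positivity)
            exact one_le_pow₀ (by norm_num : (1:ℝ) ≤ 2)
    linarith [hpart1, hpart2]
  calc ∫ ω, f ω ∂μ
      ≤ 2 ^ (8 * (m * L)) * (n : ℝ) ^ (m * L + m)
        + (n : ℝ) ^ (m * L + m) * 2 ^ (8 * (m * L)) := hfinal
    _ = 2 ^ (8 * (m * L) + 1) * (n : ℝ) ^ (m * L + m) := by
        rw [pow_succ]
        ring
    _ = 2 ^ (4 * d * k * L + 1) * (n : ℝ) ^ (m * L + m) := by rw [h8]
end

section
/- Let m, n, c be positive integers, and let G be a graph that is a disjoint union of at most c cycles, where a cycle of length ℓ ≥ 2 consists of ℓ vertices arranged cyclically with an edge between each consecutive pair (so a cycle of length 2 has two parallel edges between its two vertices). Suppose each vertex of G is assigned a label from [n]; the labeled edge of an edge is the unordered pair of labels of its two endpoints. If every labeled edge occurs an even number of times in total (counting all edges of G with multiplicity) and exactly m distinct labeled edges occur, then the number of distinct vertex labels used is at most m + c. -/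
open Finset

/-- The labeled edge of the cycle edge from position `t` to position `t+1 (mod L)`,
in a cycle of length `L` whose vertices carry labels `f : Fin L → Fin n`. -/
def cycEdge {n L : ℕ} (f : Fin L → Fin n) (t : Fin L) : Sym2 (Fin n) :=
  s(f t, f ⟨((t : ℕ) + 1) % L, Nat.mod_lt _ t.pos⟩)

lemma cycle_new {n L : ℕ} (f : Fin L → Fin n)
    (V : Finset (Fin n)) (E : Finset (Sym2 (Fin n)))
    (hVE : ∀ e ∈ E, ∀ x, x ∈ e → x ∈ V) :
    ((Finset.image f Finset.univ) \ V).card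
      ≤ ((Finset.image (cycEdge f) Finset.univ) \ E).card + 1 := by
  set N := (Finset.image f Finset.univ) \ V with hN
  rcases N.eq_empty_or_nonempty with h | h
  · simp [h]
  set T : Finset (Fin L) :=
    Finset.univ.filter (fun t => f t ∉ V ∧ ∀ s : Fin L, s < t → f s ≠ f t) with hT
  have hNT : N = T.image f := by
    ext v
    simp only [hN, hT, mem_sdiff, mem_image, mem_filter, mem_univ, true_and]
    constructor
    · rintro ⟨⟨t, rfl⟩, hv⟩
      set S : Finset (Fin L) := Finset.univ.filter (fun s => f s = f t) with hS
      have hSne : S.Nonempty := ⟨t, by simp [hS]⟩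
      refine ⟨S.min' hSne, ⟨?_, ?_⟩, ?_⟩
      · have : f (S.min' hSne) = f t := by
          have := S.min'_mem hSne
          simp only [hS, mem_filter] at this
          exact this.2
        rw [this]; exact hv
      · intro s hs hfs
        have hmem : f (S.min' hSne) = f t := by
          have := S.min'_mem hSne
          simp only [hS, mem_filter] at this
          exact this.2
        have : s ∈ S := by simp [hS, hfs.trans hmem]
        exact absurd (S.min'_le s this) (not_le.mpr hs)
      · have := S.min'_mem hSne
        simp only [hS, mem_filter] at this
        exact this.2
    · rintro ⟨t, ⟨hv, -⟩, rfl⟩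
      exact ⟨⟨t, rfl⟩, hv⟩
  have hinjT : Set.InjOn f T := by
    intro a ha b hb hab
    simp only [hT, mem_coe, mem_filter] at ha hb
    rcases lt_trichotomy a b with h' | h' | h'
    · exact absurd hab (hb.2.2 a h')
    · exact h'
    · exact absurd hab.symm (ha.2.2 b h')
  have hcardNT : N.card = T.card := by rw [hNT, card_image_of_injOn hinjT]
  have hTne : T.Nonempty := by
    rw [hNT] at h
    rcases h with ⟨v, hv⟩
    rcases mem_image.mp hv with ⟨t, ht, -⟩
    exact ⟨t, ht⟩
  set t0 := T.min' hTne with ht0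
  -- the map from T.erase t0 to new edges
  have key : ∀ t ∈ T.erase t0,
      (cycEdge f ⟨(t : ℕ) - 1, lt_of_le_of_lt (Nat.sub_le _ _) t.isLt⟩)
        ∈ (Finset.image (cycEdge f) Finset.univ) \ E ∧
      cycEdge f ⟨(t : ℕ) - 1, lt_of_le_of_lt (Nat.sub_le _ _) t.isLt⟩
        = s(f ⟨(t : ℕ) - 1, lt_of_le_of_lt (Nat.sub_le _ _) t.isLt⟩, f t) := by
    intro t ht
    rcases mem_erase.mp ht with ⟨htne, htT⟩
    have ht1 : 1 ≤ (t : ℕ) := by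
      have h1 : t0 ≤ t := T.min'_le t htT
      have h2 : t0 ≠ t := fun h => htne h.symm
      have : t0 < t := lt_of_le_of_ne h1 h2
      omega
    have heq : cycEdge f ⟨(t : ℕ) - 1, lt_of_le_of_lt (Nat.sub_le _ _) t.isLt⟩
        = s(f ⟨(t : ℕ) - 1, lt_of_le_of_lt (Nat.sub_le _ _) t.isLt⟩, f t) := by
      have hidx : (⟨(((⟨(t : ℕ) - 1, lt_of_le_of_lt (Nat.sub_le _ _) t.isLt⟩ : Fin L) : ℕ) + 1) % L,
          Nat.mod_lt _ (⟨(t : ℕ) - 1, lt_of_le_of_lt (Nat.sub_le _ _) t.isLt⟩ : Fin L).pos⟩ : Fin L) = t := by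
        apply Fin.ext
        show ((t : ℕ) - 1 + 1) % L = (t : ℕ)
        have h' : (t : ℕ) - 1 + 1 = (t : ℕ) := by omega
        rw [h', Nat.mod_eq_of_lt t.isLt]
      unfold cycEdge
      rw [hidx]
    refine ⟨mem_sdiff.mpr ⟨mem_image_of_mem _ (mem_univ _), ?_⟩, heq⟩
    intro hE
    have hft : f t ∈ cycEdge f ⟨(t : ℕ) - 1, lt_of_le_of_lt (Nat.sub_le _ _) t.isLt⟩ := by
      rw [heq]; exact Sym2.mem_mk_right _ _
    have : f t ∈ V := hVE _ hE _ hft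
    simp only [hT, mem_filter] at htT
    exact htT.2.1 this
  have hinj : Set.InjOn
      (fun t : Fin L => cycEdge f ⟨(t : ℕ) - 1, lt_of_le_of_lt (Nat.sub_le _ _) t.isLt⟩)
      (T.erase t0) := by
    intro a ha b hb hab
    simp only at hab
    rcases (key a ha) with ⟨-, hea⟩
    rcases (key b hb) with ⟨-, heb⟩
    rw [hea, heb] at hab
    have haT := (mem_erase.mp ha).2
    have hbT := (mem_erase.mp hb).2
    by_contra hne
    have hfab : f a ≠ f b := fun h => hne (hinjT haT hbT h)
    rcases (Sym2.mk_eq_mk_iff (p := (_, _)) (q := (_, _))).mp hab with h | h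
    · exact hfab (Prod.ext_iff.mp h).2
    · -- cross case
      have h1 : f ⟨(a : ℕ) - 1, _⟩ = f b := (Prod.ext_iff.mp h).1
      have h2 : f a = f ⟨(b : ℕ) - 1, _⟩ := (Prod.ext_iff.mp h).2
      rcases lt_trichotomy a b with hlt | hEq | hlt
      · -- a - 1 < b, contradicts b first occurrence
        simp only [hT, mem_filter] at hbT
        have : (⟨(a : ℕ) - 1, lt_of_le_of_lt (Nat.sub_le _ _) a.isLt⟩ : Fin L) < b := by
          have : (a : ℕ) - 1 < (b : ℕ) := by
            have := Fin.lt_iff_val_lt_val.mp hlt; omega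
          exact Fin.lt_iff_val_lt_val.mpr this
        exact hbT.2.2 _ this h1
      · exact hne hEq
      · simp only [hT, mem_filter] at haT
        have : (⟨(b : ℕ) - 1, lt_of_le_of_lt (Nat.sub_le _ _) b.isLt⟩ : Fin L) < a := by
          have : (b : ℕ) - 1 < (a : ℕ) := by
            have := Fin.lt_iff_val_lt_val.mp hlt; omega
          exact Fin.lt_iff_val_lt_val.mpr this
        exact haT.2.2 _ this h2.symm
  have hle : (T.erase t0).card ≤ ((Finset.image (cycEdge f) Finset.univ) \ E).card := by
    apply Finset.card_le_card_of_injOn _ (fun t ht => (key t ht).1) hinj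
  have : T.card = (T.erase t0).card + 1 := by
    rw [Finset.card_erase_of_mem (T.min'_mem hTne)]
    have : 1 ≤ T.card := Finset.card_pos.mpr hTne
    omega
  omega

lemma key_bound {n c' : ℕ} (L : Fin c' → ℕ) (f : (j : Fin c') → Fin (L j) → Fin n)
    (s : Finset (Fin c')) :
    (s.biUnion (fun j => Finset.image (f j) Finset.univ)).card
      ≤ (s.biUnion (fun j => Finset.image (cycEdge (f j)) Finset.univ)).card + s.card := by
  classical
  induction s using Finset.induction_on with
  | empty => simp
  | @insert j s hj ih =>
    rw [Finset.biUnion_insert, Finset.biUnion_insert, Finset.card_insert_of_notMem hj]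
    set V := s.biUnion (fun j => Finset.image (f j) Finset.univ) with hV
    set E := s.biUnion (fun j => Finset.image (cycEdge (f j)) Finset.univ) with hE
    have hVE : ∀ e ∈ E, ∀ x, x ∈ e → x ∈ V := by
      intro e he x hx
      rcases Finset.mem_biUnion.mp he with ⟨i, hi, hei⟩
      rcases Finset.mem_image.mp hei with ⟨t, -, rfl⟩
      rcases Sym2.mem_iff.mp hx with h | h
      · exact Finset.mem_biUnion.mpr ⟨i, hi, Finset.mem_image.mpr ⟨t, mem_univ _, h.symm⟩⟩
      · exact Finset.mem_biUnion.mpr ⟨i, hi, Finset.mem_image.mpr ⟨_, mem_univ _, h.symm⟩⟩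
    have h1 := cycle_new (f j) V E hVE
    have h2 : ((Finset.image (f j) Finset.univ) \ V).card + V.card
        = ((Finset.image (f j) Finset.univ) ∪ V).card := Finset.card_sdiff_add_card _ _
    have h3 : ((Finset.image (cycEdge (f j)) Finset.univ) \ E).card + E.card
        = ((Finset.image (cycEdge (f j)) Finset.univ) ∪ E).card := Finset.card_sdiff_add_card _ _
    omega

/-- In a vertex-labeled disjoint union of at most `c` cycles in which every labeled edge
occurs an even number of times (with multiplicity) and exactly `m` distinct labeled edges
occur, the number of distinct vertex labels is at most `m + c`. -/
theorem distinct_labels_le_of_even_edges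
    (m n c : ℕ) (hm : 0 < m) (hn : 0 < n) (hc : 0 < c)
    (c' : ℕ) (hc' : c' ≤ c) (L : Fin c' → ℕ) (hL : ∀ j, 2 ≤ L j)
    (f : (j : Fin c') → Fin (L j) → Fin n)
    (heven : ∀ e : Sym2 (Fin n),
      Even (∑ j : Fin c',
        (Finset.univ.filter (fun t : Fin (L j) => cycEdge (f j) t = e)).card))
    (hm' : (Finset.univ.biUnion
        (fun j : Fin c' => Finset.image (fun t : Fin (L j) => cycEdge (f j) t)
          Finset.univ)).card = m) :
    (Finset.univ.biUnion (fun j : Fin c' => Finset.image (f j) Finset.univ)).card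
      ≤ m + c := by
  have h := key_bound L f Finset.univ
  simp only [Finset.card_univ, Fintype.card_fin] at h
  calc (Finset.univ.biUnion (fun j : Fin c' => Finset.image (f j) Finset.univ)).card
      ≤ (Finset.univ.biUnion
          (fun j : Fin c' => Finset.image (cycEdge (f j)) Finset.univ)).card + c' := h
    _ ≤ m + c := by
        have : (Finset.univ.biUnion
            (fun j : Fin c' => Finset.image (cycEdge (f j)) Finset.univ)).card = m := hm'
        omega
end
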